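/- arXiv:1902.05926 — 8 statements merged into one kernel-verified Lean document; each statement's English description precedes it below -/
import Mathlib

section
/- FSL is topologically Weihrauch reducible to overt choice for S₀: there exist continuous functions K and H such that K maps every p : ℕ → ℕ enumerating an FSL-instance tree T ⊆ List Bool to a name of some nonempty closed set A ⊆ S₀, and H maps (p, q), for q any name of any point u ∈ A, to a δ_𝒮-name r such that δ_𝒮(r) is a leaf of T. -/
/-- `p` enumerates `S` if `S = {n | ∃ k, p k = n + 1}`. -/
def Enumerates (p : ℕ → ℕ) (S : Set ℕ) : Prop := S = {n | ∃ k, p k = n + 1}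

/-- The space `S₀`: finite sequences of naturals. -/
structure S0 where
  val : List ℕ

/-- The topology of `S₀` is generated by the sets `{u | w is not a prefix of u}`. -/
instance : TopologicalSpace S0 :=
  TopologicalSpace.generateFrom {V | ∃ w : List ℕ, V = {u : S0 | ¬ w <+: u.val}}

/-- The basic open set of `S₀` determined by a finite set `F` of words:
all points having no prefix in `F`. -/
def NF (F : Finset (List ℕ)) : Set S0 := {u | ∀ w ∈ F, ¬ w <+: u.val}

/-- A name of a point `u ∈ S₀` enumerates the codes of the finite sets `F` with `u ∈ N_F`. -/
def S0PointName (encF : Finset (List ℕ) → ℕ) (u : S0) (p : ℕ → ℕ) : Prop :=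
  Enumerates p {n | ∃ F : Finset (List ℕ), encF F = n ∧ u ∈ NF F}

/-- A name of a closed set `A ⊆ S₀` enumerates the codes of the finite sets `F` with
`N_F ∩ A ≠ ∅`. -/
def S0ClosedName (encF : Finset (List ℕ) → ℕ) (A : Set S0) (p : ℕ → ℕ) : Prop :=
  Enumerates p {n | ∃ F : Finset (List ℕ), encF F = n ∧ (NF F ∩ A).Nonempty}

/-- `p` enumerates the tree `T ⊆ List Bool` (via the injective encoding `code`) if
`T = {w | ∃ k, p k = code w + 1}`. -/
def EnumeratesTree (code : List Bool → ℕ) (p : ℕ → ℕ) (T : Set (List Bool)) : Prop :=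
  T = {w | ∃ k, p k = code w + 1}

/-- `w` is a leaf of `T`: it belongs to `T` and has no proper extension in `T`. -/
def IsLeaf (T : Set (List Bool)) (w : List Bool) : Prop :=
  w ∈ T ∧ ∀ u ∈ T, w <+: u → u = w

/-- `T` is an FSL-instance: a nonempty prefix-closed set of binary words such that every
element has an extension in `T` that is a leaf of `T`. -/
def FSLTree (T : Set (List Bool)) : Prop :=
  T.Nonempty ∧ (∀ w ∈ T, ∀ u, u <+: w → u ∈ T) ∧
    ∀ w ∈ T, ∃ u, w <+: u ∧ IsLeaf T u

/-- The letter contributed by one pair of bits in the representation `δ_𝒮`. -/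
def pairLetter : Bool → Bool → List Bool
  | true, false => [false]
  | false, true => [true]
  | _, _ => []

/-- The word read off from the first `n` consecutive pairs of `r`. -/
def decodePairs (r : ℕ → Bool) : ℕ → List Bool
  | 0 => []
  | n + 1 => decodePairs r n ++ pairLetter (r (2 * n)) (r (2 * n + 1))

/-- `r` is a `δ_𝒮`-name of the word `w`. -/
def DeltaS (r : ℕ → Bool) (w : List Bool) : Prop :=
  ∃ n : ℕ, (∀ k, 2 * n ≤ k → r k = false) ∧ decodePairs r n = w

namespace FSLRed

open scoped Classical

variable (code : List Bool → ℕ) (encF : Finset (List ℕ) → ℕ)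

/-! ### The parse machinery -/

/-- The tree enumerated by `p`. -/
def TreeOf (p : ℕ → ℕ) : Set (List Bool) := {w | ∃ k, p k = code w + 1}

/-- Stage `a` announces a proper extension of `c`. -/
def isExtAnn (p : ℕ → ℕ) (c : List Bool) (a : ℕ) : Prop :=
  ∃ e : List Bool, p a = code e + 1 ∧ c <+: e ∧ c ≠ e

/-- The word coded by the value `v` (junk if none). -/
noncomputable def wordAtV (v : ℕ) : List Bool :=
  if h : ∃ e, v = code e + 1 then h.choose else []

/-- Gate for a letter `ℓ` at state `s = (word, horizon)`: the stamp `ℓ / 2` must be the first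
stage `≥` the horizon announcing a proper extension of the current word. -/
def StepOK (p : ℕ → ℕ) (s : List Bool × ℕ) (ℓ : ℕ) : Prop :=
  s.2 ≤ ℓ / 2 ∧ isExtAnn code p s.1 (ℓ / 2) ∧
    ∀ j, s.2 ≤ j → j < ℓ / 2 → ¬ isExtAnn code p s.1 j

/-- One parse step: even letters capture the announced extension, odd letters skip it. -/
noncomputable def step (p : ℕ → ℕ) (s : List Bool × ℕ) (ℓ : ℕ) : Option (List Bool × ℕ) :=
  if StepOK code p s ℓ then
    some (if ℓ % 2 = 0 then (wordAtV code (p (ℓ / 2)), ℓ / 2 + 1) else (s.1, ℓ / 2 + 1))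
  else none

/-- Parsing a list of letters from a state. -/
noncomputable def parseA (p : ℕ → ℕ) : List Bool × ℕ → List ℕ → Option (List Bool × ℕ)
  | s, [] => some s
  | s, ℓ :: x =>
    match step code p s ℓ with
    | none => none
    | some s' => parseA p s' x

/-- `w` is a leaf of the tree of `p`. -/
def LeafOf (p : ℕ → ℕ) (w : List Bool) : Prop := IsLeaf (TreeOf code p) w

/-- A complete parse string: parses from the initial state and ends at a leaf. -/
def Compl (p : ℕ → ℕ) (x : List ℕ) : Prop :=
  ∃ s : List Bool × ℕ, parseA code p ([], 0) x = some s ∧ LeafOf code p s.1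

/-- The closed set assigned to `p`: all points extending a complete parse string. -/
def Apts (p : ℕ → ℕ) : Set S0 := {u | ∃ x, x <+: u.val ∧ Compl code p x}

/-- `w` is the word encoded by the point `u` (relative to `p`). -/
def WordAt (p : ℕ → ℕ) (u : S0) (w : List Bool) : Prop :=
  ∃ x τ, x <+: u.val ∧ parseA code p ([], 0) x = some (w, τ) ∧ LeafOf code p w

/-! ### Truncation -/

def trunc (p : ℕ → ℕ) (k : ℕ) : ℕ → ℕ := fun i => if i < k then p i else 0

/-! ### The forward functional K -/

def Valid1 (p : ℕ → ℕ) : Prop := ∃ T, FSLTree T ∧ EnumeratesTree code p T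

def Cert (p : ℕ → ℕ) (m : ℕ) (F : Finset (List ℕ)) : Prop :=
  ∀ p', Valid1 code p' → trunc p' m = trunc p m → (NF F ∩ Apts code p').Nonempty

noncomputable def Kfun (p : ℕ → ℕ) (n : ℕ) : ℕ :=
  if ∃ F : Finset (List ℕ), encF F = n.unpair.1 ∧ Cert code p n.unpair.2 F then
    n.unpair.1 + 1
  else 0

/-! ### The backward functional H -/

def Safe (p q : ℕ → ℕ) (k : ℕ) (c : List Bool) : Prop :=
  ∀ p' q' (u' : S0) w', trunc p' k = trunc p k → trunc q' k = trunc q k →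
    S0PointName encF u' q' → WordAt code p' u' w' → c <+: w'

noncomputable def Egrow (p q : ℕ → ℕ) : ℕ → List Bool
  | 0 => []
  | k + 1 =>
    let c := Egrow p q k
    if Safe code encF p q (k + 1) (c ++ [true]) then c ++ [true]
    else if Safe code encF p q (k + 1) (c ++ [false]) then c ++ [false]
    else c

noncomputable def Hfun (pq : (ℕ → ℕ) × (ℕ → ℕ)) (n : ℕ) : Bool :=
  if Egrow code encF pq.1 pq.2 (n / 2 + 1) = Egrow code encF pq.1 pq.2 (n / 2) then false
  else if n % 2 = 0 then
    !(if Safe code encF pq.1 pq.2 (n / 2 + 1)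
        (Egrow code encF pq.1 pq.2 (n / 2) ++ [true]) then true else false)
  else
    if Safe code encF pq.1 pq.2 (n / 2 + 1)
        (Egrow code encF pq.1 pq.2 (n / 2) ++ [true]) then true else false

/-! ### Basic lemmas about the parse machinery -/

section Basic

variable {code : List Bool → ℕ} {encF : Finset (List ℕ) → ℕ}

theorem wordAtV_eq (hcode : Function.Injective code) {v : ℕ} {e : List Bool}
    (h : v = code e + 1) : wordAtV code v = e := by
  rw [wordAtV, dif_pos ⟨e, h⟩]
  have h2 := (⟨e, h⟩ : ∃ e, v = code e + 1).choose_spec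
  have : code e + 1 = code (⟨e, h⟩ : ∃ e, v = code e + 1).choose + 1 := by rw [← h, ← h2]
  exact (hcode (Nat.succ_injective this)).symm

theorem step_eq_some {p : ℕ → ℕ} {s s' : List Bool × ℕ} {ℓ : ℕ}
    (h : step code p s ℓ = some s') :
    StepOK code p s ℓ ∧
      s' = (if ℓ % 2 = 0 then (wordAtV code (p (ℓ / 2)), ℓ / 2 + 1) else (s.1, ℓ / 2 + 1)) := by
  by_cases hok : StepOK code p s ℓ
  · refine ⟨hok, ?_⟩
    rw [step, if_pos hok] at h
    exact (Option.some_injective _ h).symm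
  · rw [step, if_neg hok] at h; exact absurd h (by simp)

theorem step_tau {p : ℕ → ℕ} {s s' : List Bool × ℕ} {ℓ : ℕ}
    (h : step code p s ℓ = some s') : s.2 ≤ ℓ / 2 ∧ s'.2 = ℓ / 2 + 1 := by
  obtain ⟨hok, hs⟩ := step_eq_some h
  refine ⟨hok.1, ?_⟩
  rcases hs with rfl
  by_cases h2 : ℓ % 2 = 0 <;> simp [h2]

theorem step_word (hcode : Function.Injective code) {p : ℕ → ℕ} {s s' : List Bool × ℕ} {ℓ : ℕ}
    (h : step code p s ℓ = some s') : s.1 <+: s'.1 := by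
  obtain ⟨hok, hs⟩ := step_eq_some h
  rcases hs with rfl
  obtain ⟨e, he, hpre, _⟩ := hok.2.1
  by_cases h2 : ℓ % 2 = 0
  · simpa [h2, wordAtV_eq hcode he] using hpre
  · simp [h2]

theorem parseA_append {p : ℕ → ℕ} (s : List Bool × ℕ) (x y : List ℕ) :
    parseA code p s (x ++ y) = (parseA code p s x).bind (fun s' => parseA code p s' y) := by
  induction x generalizing s with
  | nil => simp [parseA]
  | cons ℓ x ih =>
    simp only [List.cons_append, parseA]
    cases step code p s ℓ with
    | none => simp
    | some s' => simp [ih]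

theorem parseA_tau_mono {p : ℕ → ℕ} {s s' : List Bool × ℕ} {x : List ℕ}
    (h : parseA code p s x = some s') : s.2 ≤ s'.2 := by
  induction x generalizing s with
  | nil => simp only [parseA, Option.some_inj] at h; rw [h]
  | cons ℓ x ih =>
    simp only [parseA] at h
    cases hst : step code p s ℓ with
    | none => rw [hst] at h; exact absurd h (by simp)
    | some s₁ =>
      rw [hst] at h
      have h1 := step_tau hst
      have h2 := ih h
      omega

theorem parseA_word_mono (hcode : Function.Injective code) {p : ℕ → ℕ}
    {s s' : List Bool × ℕ} {x : List ℕ}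
    (h : parseA code p s x = some s') : s.1 <+: s'.1 := by
  induction x generalizing s with
  | nil => simp only [parseA, Option.some_inj] at h; rw [h]
  | cons ℓ x ih =>
    simp only [parseA] at h
    cases hst : step code p s ℓ with
    | none => rw [hst] at h; exact absurd h (by simp)
    | some s₁ =>
      rw [hst] at h
      exact (step_word hcode hst).trans (ih h)

theorem parseA_of_prefix {p : ℕ → ℕ} {s s' : List Bool × ℕ} {x y : List ℕ}
    (hpre : y <+: x) (h : parseA code p s x = some s') :
    ∃ s₁, parseA code p s y = some s₁ ∧ parseA code p s₁ (x.drop y.length) = some s' := by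
  obtain ⟨t, rfl⟩ := hpre
  rw [parseA_append] at h
  cases hy : parseA code p s y with
  | none => rw [hy] at h; exact absurd h (by simp)
  | some s₁ =>
    rw [hy] at h
    exact ⟨s₁, rfl, by simpa using h⟩

theorem isExtAnn_congr {p p' : ℕ → ℕ} {c : List Bool} {a : ℕ} (h : p' a = p a) :
    isExtAnn code p' c a ↔ isExtAnn code p c a := by
  unfold isExtAnn; rw [h]

theorem step_congr {p p' : ℕ → ℕ} {s : List Bool × ℕ} {ℓ : ℕ}
    (h : ∀ j, s.2 ≤ j → j ≤ ℓ / 2 → p' j = p j) :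
    step code p' s ℓ = step code p s ℓ := by
  have hok : StepOK code p' s ℓ ↔ StepOK code p s ℓ := by
    unfold StepOK
    constructor
    · rintro ⟨h1, h2, h3⟩
      exact ⟨h1, (isExtAnn_congr (h _ h1 le_rfl)).1 h2,
        fun j hj1 hj2 => fun hc => h3 j hj1 hj2 ((isExtAnn_congr (h _ hj1 hj2.le)).2 hc)⟩
    · rintro ⟨h1, h2, h3⟩
      exact ⟨h1, (isExtAnn_congr (h _ h1 le_rfl)).2 h2,
        fun j hj1 hj2 => fun hc => h3 j hj1 hj2 ((isExtAnn_congr (h _ hj1 hj2.le)).1 hc)⟩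
  unfold step
  by_cases h2 : StepOK code p s ℓ
  · rw [if_pos h2, if_pos (hok.2 h2)]
    have : p' (ℓ / 2) = p (ℓ / 2) := h _ h2.1 le_rfl
    rw [this]
  · rw [if_neg h2, if_neg (fun hc => h2 (hok.1 hc))]

theorem parseA_congr {p p' : ℕ → ℕ} {s s' : List Bool × ℕ} {x : List ℕ}
    (h : parseA code p s x = some s') (hagree : ∀ j, s.2 ≤ j → j < s'.2 → p' j = p j) :
    parseA code p' s x = some s' := by
  induction x generalizing s with
  | nil => exact h
  | cons ℓ x ih =>
    simp only [parseA] at h ⊢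
    cases hst : step code p s ℓ with
    | none => rw [hst] at h; exact absurd h (by simp)
    | some s₁ =>
      rw [hst] at h
      have h1 := step_tau hst
      have h2 := parseA_tau_mono h
      have hstep : step code p' s ℓ = some s₁ := by
        rw [step_congr (fun j hj1 hj2 => hagree j hj1 (by omega))]; exact hst
      rw [hstep]
      exact ih h (fun j hj1 hj2 => hagree j (by omega) hj2)

/-- The stamp of any valid letter at a state is uniquely determined. -/
theorem step_stamp_unique {p : ℕ → ℕ} {s s₁ s₂ : List Bool × ℕ} {ℓ ℓ' : ℕ}
    (h : step code p s ℓ = some s₁) (h' : step code p s ℓ' = some s₂) : ℓ / 2 = ℓ' / 2 := by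
  obtain ⟨⟨ha1, ha2, ha3⟩, -⟩ := step_eq_some h
  obtain ⟨⟨hb1, hb2, hb3⟩, -⟩ := step_eq_some h'
  by_contra hne
  rcases Nat.lt_or_ge (ℓ / 2) (ℓ' / 2) with hlt | hge
  · exact hb3 _ ha1 hlt ha2
  · exact ha3 _ hb1 (by omega) hb2

/-- the other letter with the same stamp -/
def otherL (ℓ : ℕ) : ℕ := if ℓ % 2 = 0 then ℓ + 1 else ℓ - 1

theorem otherL_spec {ℓ ℓ' : ℕ} (h : ℓ / 2 = ℓ' / 2) (hne : ℓ ≠ ℓ') : ℓ' = otherL ℓ := by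
  unfold otherL
  by_cases h2 : ℓ % 2 = 0
  · rw [if_pos h2]; omega
  · rw [if_neg h2]; omega

/-- list trichotomy with explicit splitting data -/
theorem list_tri (x y : List ℕ) :
    x <+: y ∨ y <+: x ∨
      ∃ z a b t t', a ≠ b ∧ x = z ++ a :: t ∧ y = z ++ b :: t' := by
  induction x generalizing y with
  | nil => exact Or.inl ⟨y, rfl⟩
  | cons c x ih =>
    cases y with
    | nil => exact Or.inr (Or.inl ⟨c :: x, rfl⟩)
    | cons d y' =>
      by_cases hcd : c = d
      · subst hcd
        rcases ih y' with h | h | ⟨z, a, b, t, t', hne, hx, hy⟩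
        · exact Or.inl (List.cons_prefix_cons.mpr ⟨rfl, h⟩)
        · exact Or.inr (Or.inl (List.cons_prefix_cons.mpr ⟨rfl, h⟩))
        · exact Or.inr (Or.inr ⟨c :: z, a, b, t, t', hne, by simp [hx], by simp [hy]⟩)
      · exact Or.inr (Or.inr ⟨[], c, d, x, y', hcd, rfl, rfl⟩)

end Basic

/-! ### Closedness of `Apts` -/

section Closed

variable {code : List Bool → ℕ}

noncomputable def nextA (code : List Bool → ℕ) (p : ℕ → ℕ) (c : List Bool) (τ : ℕ) : ℕ :=
  sInf {a | τ ≤ a ∧ isExtAnn code p c a}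

theorem step_stamp_eq_nextA {p : ℕ → ℕ} {s s' : List Bool × ℕ} {ℓ : ℕ}
    (h : step code p s ℓ = some s') : ℓ / 2 = nextA code p s.1 s.2 := by
  obtain ⟨⟨h1, h2, h3⟩, -⟩ := step_eq_some h
  have hmem : ℓ / 2 ∈ {a | s.2 ≤ a ∧ isExtAnn code p s.1 a} := ⟨h1, h2⟩
  have hinf := Nat.sInf_le hmem
  rcases eq_or_lt_of_le hinf with h' | h'
  · exact h'.symm
  · have hin := Nat.sInf_mem (⟨_, hmem⟩ : {a | s.2 ≤ a ∧ isExtAnn code p s.1 a}.Nonempty)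
    exact absurd hin.2 (h3 _ hin.1 h')

noncomputable def blocker (code : List Bool → ℕ) (p : ℕ → ℕ) (v : List ℕ) (i b : ℕ) :
    List ℕ :=
  match parseA code p ([], 0) (v.take i) with
  | some s => v.take i ++ [2 * nextA code p s.1 s.2 + b]
  | none => v ++ [0, 0]

noncomputable def blockSet (code : List Bool → ℕ) (p : ℕ → ℕ) (v : List ℕ) :
    Finset (List ℕ) :=
  ((Finset.range (v.length + 1) ×ˢ ({0, 1} : Finset ℕ)).image
      fun ib => blocker code p v ib.1 ib.2).filter fun f => ¬ f <+: v

theorem mem_blockSet_of {p : ℕ → ℕ} {v : List ℕ} {i b : ℕ} (hi : i ≤ v.length)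
    (hb : b = 0 ∨ b = 1) (hnp : ¬ blocker code p v i b <+: v) :
    blocker code p v i b ∈ blockSet code p v := by
  refine Finset.mem_filter.2 ⟨Finset.mem_image.2 ⟨(i, b), ?_, rfl⟩, hnp⟩
  refine Finset.mem_product.2 ⟨Finset.mem_range.2 (by omega), ?_⟩
  rcases hb with rfl | rfl <;> simp

theorem NF_isOpen (F : Finset (List ℕ)) : IsOpen (NF F) := by
  have : NF F = ⋂ w ∈ F, {u : S0 | ¬ w <+: u.val} := by ext u; simp [NF]
  rw [this]
  exact isOpen_biInter_finset fun w _ => TopologicalSpace.GenerateOpen.basic _ ⟨w, rfl⟩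

/-- any element of `Apts` that shares structure with `v` is blocked -/
theorem blockSet_blocks {p : ℕ → ℕ} {v : S0} (hv : v ∉ Apts code p) :
    ∀ a ∈ Apts code p, a ∉ NF (blockSet code p v.val) := by
  rintro a ⟨x, hxa, s, hparse, hleaf⟩ hNF
  rcases list_tri x v.val with hcase | hcase | ⟨z, a₁, b₁, t, t', hne, hx, hy⟩
  · exact hv ⟨x, hcase, s, hparse, hleaf⟩
  · -- v.val <+: x
    by_cases hxv : x = v.val
    · refine hv ⟨x, ?_, s, hparse, hleaf⟩
      rw [hxv]
    · obtain ⟨sV, hV, hrest⟩ := parseA_of_prefix hcase hparse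
      obtain ⟨t, rfl⟩ := hcase
      have ht : t ≠ [] := by rintro rfl; exact hxv (by simp)
      obtain ⟨ℓ, t', rfl⟩ := List.exists_cons_of_ne_nil ht
      rw [List.drop_left] at hrest
      simp only [parseA] at hrest
      cases hst : step code p sV ℓ with
      | none => rw [hst] at hrest; exact absurd hrest (by simp)
      | some s₁ =>
        have hstamp := step_stamp_eq_nextA hst
        have hblocker : blocker code p v.val v.val.length (ℓ % 2) = v.val ++ [ℓ] := by
          have h2 : 2 * (ℓ / 2) + ℓ % 2 = ℓ := by omega
          simp only [blocker, List.take_length, hV, ← hstamp, h2]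
        have hmem : blocker code p v.val v.val.length (ℓ % 2) ∈ blockSet code p v.val := by
          refine mem_blockSet_of le_rfl (Nat.mod_two_eq_zero_or_one ℓ) ?_
          rw [hblocker]
          intro hpre
          have := hpre.length_le
          simp at this
        refine hNF _ hmem ?_
        rw [hblocker]
        exact (show v.val ++ [ℓ] <+: v.val ++ ℓ :: t' from ⟨t', by simp⟩).trans hxa
  · -- genuine split
    have hzx : z ++ [a₁] <+: x := ⟨t, by simp [hx]⟩
    obtain ⟨sz, hz, hrest⟩ := parseA_of_prefix (show z <+: x from ⟨a₁ :: t, by simp [hx]⟩) hparse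
    have hdrop : x.drop z.length = a₁ :: t := by rw [hx, List.drop_left]
    rw [hdrop] at hrest
    simp only [parseA] at hrest
    cases hst : step code p sz a₁ with
    | none => rw [hst] at hrest; exact absurd hrest (by simp)
    | some s₁ =>
      have hstamp := step_stamp_eq_nextA hst
      have hzv : z = v.val.take z.length := by
        have : z <+: v.val := ⟨b₁ :: t', by simp [hy]⟩
        exact List.prefix_iff_eq_take.1 this
      have hlen : z.length ≤ v.val.length := by
        simp [hy]
      have hblocker : blocker code p v.val z.length (a₁ % 2) = z ++ [a₁] := by
        have h2 : 2 * (a₁ / 2) + a₁ % 2 = a₁ := by omega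
        simp only [blocker, ← hzv, hz, ← hstamp, h2]
      have hmem : blocker code p v.val z.length (a₁ % 2) ∈ blockSet code p v.val := by
        refine mem_blockSet_of hlen (Nat.mod_two_eq_zero_or_one a₁) ?_
        rw [hblocker, hy]
        intro hpre
        rw [List.prefix_append_right_inj] at hpre
        exact hne (List.cons_prefix_cons.1 hpre).1
      refine hNF _ hmem ?_
      rw [hblocker]
      exact hzx.trans hxa

theorem Apts_closed (p : ℕ → ℕ) : IsClosed (Apts code p) := by
  rw [← isOpen_compl_iff]
  refine isOpen_iff_forall_mem_open.2 fun v hv => ?_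
  refine ⟨NF (blockSet code p v.val), fun u hu hau => blockSet_blocks hv u hau hu, 
    NF_isOpen _, ?_⟩
  intro f hf
  exact (Finset.mem_filter.1 hf).2

end Closed

/-! ### Reaching announced extensions, nonemptiness -/

section Reach

variable {code : List Bool → ℕ}

theorem chain_reach (hcode : Function.Injective code) (p : ℕ → ℕ) :
    ∀ (n : ℕ) (c : List Bool) (τ A : ℕ), A - τ ≤ n → τ ≤ A → isExtAnn code p c A →
      ∃ x, parseA code p (c, τ) x = some (wordAtV code (p A), A + 1) ∧
        ∀ ℓ ∈ x, τ ≤ ℓ / 2 ∧ isExtAnn code p c (ℓ / 2) := by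
  intro n
  induction n with
  | zero =>
    intro c τ A hn hτA hA
    have hAτ : A = τ := by omega
    have hd : (2 * A) / 2 = A := by omega
    refine ⟨[2 * A], ?_, ?_⟩
    · have hok : StepOK code p (c, τ) (2 * A) := by
        refine ⟨by simp; omega, by simpa using hA, fun j hj1 hj2 => ?_⟩
        simp at hj2; omega
      simp only [parseA, step, if_pos hok]
      have he : (2 * A) % 2 = 0 := by omega
      simp [he, hd]
    · intro ℓ hℓ
      simp at hℓ
      subst hℓ
      rw [hd]
      exact ⟨by omega, hA⟩
  | succ n ih =>
    intro c τ A hn hτA hA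
    by_cases hmin : ∀ j, τ ≤ j → j < A → ¬ isExtAnn code p c j
    · have hd : (2 * A) / 2 = A := by omega
      refine ⟨[2 * A], ?_, ?_⟩
      · have hok : StepOK code p (c, τ) (2 * A) := by
          refine ⟨by simp; omega, by simpa using hA, fun j hj1 hj2 => ?_⟩
          simp at hj2
          exact hmin j hj1 (by omega)
        simp only [parseA, step, if_pos hok]
        have he : (2 * A) % 2 = 0 := by omega
        simp [he, hd]
      · intro ℓ hℓ
        simp at hℓ
        subst hℓ
        rw [hd]
        exact ⟨by omega, hA⟩
    · push_neg at hmin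
      obtain ⟨j₁, hj1, hj2, hj3⟩ := hmin
      set S : Set ℕ := {j | τ ≤ j ∧ j < A ∧ isExtAnn code p c j} with hS
      have hSne : S.Nonempty := ⟨j₁, hj1, hj2, hj3⟩
      set j₀ := sInf S with hj₀
      have hj₀mem : j₀ ∈ S := Nat.sInf_mem hSne
      have hm1 : τ ≤ j₀ := hj₀mem.1
      have hm2 : j₀ < A := hj₀mem.2.1
      have hok : StepOK code p (c, τ) (2 * j₀ + 1) := by
        have hd : (2 * j₀ + 1) / 2 = j₀ := by omega
        refine ⟨by rw [hd]; exact hj₀mem.1, by rw [hd]; exact hj₀mem.2.2,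
          fun j hja hjb => fun hc => ?_⟩
        rw [hd] at hjb
        exact Nat.notMem_of_lt_sInf hjb ⟨hja, by omega, hc⟩
      obtain ⟨x', hx', hstamps⟩ := ih c (j₀ + 1) A (by omega) (by omega) hA
      have ho : (2 * j₀ + 1) % 2 = 1 := by omega
      have hd : (2 * j₀ + 1) / 2 = j₀ := by omega
      refine ⟨(2 * j₀ + 1) :: x', ?_, ?_⟩
      · simp only [parseA, step, if_pos hok]
        simp only [ho, hd]
        simpa using hx'
      · intro ℓ hℓ
        rcases List.mem_cons.1 hℓ with rfl | hℓ'
        · rw [hd]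
          exact ⟨hm1, hj₀mem.2.2⟩
        · obtain ⟨h1, h2⟩ := hstamps ℓ hℓ'
          exact ⟨by omega, h2⟩

theorem Apts_nonempty (hcode : Function.Injective code) {p : ℕ → ℕ} {T : Set (List Bool)}
    (hT : FSLTree T) (hE : EnumeratesTree code p T) : (Apts code p).Nonempty := by
  have hTeq : T = TreeOf code p := hE
  obtain ⟨w₀, hw₀⟩ := hT.1
  have hnil : [] ∈ T := hT.2.1 w₀ hw₀ [] (by simp)
  obtain ⟨w, hpre, hleaf⟩ := hT.2.2 [] hnil
  by_cases hw : w = []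
  · refine ⟨⟨[]⟩, [], by simp, (([], 0) : List Bool × ℕ), by simp [parseA], ?_⟩
    rw [LeafOf, ← hTeq]
    exact hw ▸ hleaf
  · have hwT : w ∈ TreeOf code p := hTeq ▸ hleaf.1
    obtain ⟨A, hA⟩ := hwT
    have hext : isExtAnn code p [] A := ⟨w, hA, by simp, fun h => hw h.symm⟩
    obtain ⟨x, hx, -⟩ := chain_reach hcode p (A - 0) [] 0 A le_rfl (Nat.zero_le A) hext
    refine ⟨⟨x⟩, x, by simp, (wordAtV code (p A), A + 1), hx, ?_⟩
    rw [LeafOf, ← hTeq]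
    simp only [wordAtV_eq hcode hA]
    exact hleaf

end Reach

/-! ### The certification lemma -/

section CertSec

variable {code : List Bool → ℕ} {encF : Finset (List ℕ) → ℕ}

noncomputable def maxEntry (F : Finset (List ℕ)) : ℕ := F.sup fun f => f.foldr max 0

theorem le_foldr_max {a : ℕ} : ∀ {f : List ℕ}, a ∈ f → a ≤ f.foldr max 0 := by
  intro f
  induction f with
  | nil => simp
  | cons b f ih =>
    intro h
    rw [List.foldr_cons]
    rcases List.mem_cons.1 h with rfl | h'
    · exact le_max_left _ _
    · exact le_trans (ih h') (le_max_right _ _)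

theorem entry_le_maxEntry {F : Finset (List ℕ)} {f : List ℕ} (hf : f ∈ F) {a : ℕ}
    (ha : a ∈ f) : a ≤ maxEntry F :=
  (le_foldr_max ha).trans (Finset.le_sup hf)

theorem trunc_eq_iff {p p' : ℕ → ℕ} {m : ℕ} (h : trunc p' m = trunc p m) :
    ∀ i < m, p' i = p i := by
  intro i hi
  have := congrFun h i
  simpa [trunc, hi] using this

theorem cert_lemma (hcode : Function.Injective code)
    {p : ℕ → ℕ} {F : Finset (List ℕ)}
    (h : (NF F ∩ Apts code p).Nonempty) : ∃ m, Cert code p m F := by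
  obtain ⟨u, huF, x, hxu, ⟨w, τ₀⟩, hparse, hleaf⟩ := h
  have hwT : w ∈ TreeOf code p := hleaf.1
  obtain ⟨kw, hkw⟩ := hwT
  refine ⟨max (max (τ₀ + 1) (kw + 1)) (maxEntry F + 1), ?_⟩
  intro p' hp' htr
  have hagree : ∀ i < max (max (τ₀ + 1) (kw + 1)) (maxEntry F + 1), p' i = p i :=
    trunc_eq_iff htr
  set m := max (max (τ₀ + 1) (kw + 1)) (maxEntry F + 1) with hm
  obtain ⟨T', hT', hE'⟩ := hp'
  -- the parse of x is stable
  have hstable : parseA code p' ([], 0) x = some (w, τ₀) :=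
    parseA_congr hparse (fun j _ hj => hagree j (by omega))
  -- w is in the tree of p'
  have hwT' : w ∈ TreeOf code p' := ⟨kw, by rw [hagree kw (by omega)]; exact hkw⟩
  by_cases hwl : LeafOf code p' w
  · -- the same string still works
    refine ⟨⟨x⟩, ?_, x, by simp, (w, τ₀), hstable, hwl⟩
    intro f hf hpre
    exact huF f hf (hpre.trans hxu)
  · -- w got de-leafed: climb to a leaf of T'
    have hTeq' : T' = TreeOf code p' := hE'
    have hex : ∃ e ∈ T', w <+: e ∧ e ≠ w := by
      by_contra hno
      push_neg at hno
      refine hwl ⟨hwT', fun e he hpre => ?_⟩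
      exact hno e (by rw [hTeq']; exact he) hpre
    obtain ⟨e, heT', hwe, hne⟩ := hex
    obtain ⟨wst, hwst, hwstleaf⟩ := hT'.2.2 e heT'
    have hwpre : w <+: wst := hwe.trans hwst
    have hwne : w ≠ wst := by
      rintro rfl
      exact hne ((hwe.eq_of_length (le_antisymm hwe.length_le hwst.length_le)).symm)
    have hwstT' : wst ∈ TreeOf code p' := hTeq' ▸ hwstleaf.1
    obtain ⟨Ast, hAst⟩ := hwstT'
    -- Ast is at least m
    have hAstm : m ≤ Ast := by
      by_contra hlt
      push_neg at hlt
      have : p Ast = code wst + 1 := by rw [← hagree Ast hlt]; exact hAst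
      exact hwne (hleaf.2 wst ⟨Ast, this⟩ hwpre).symm
    have hext : isExtAnn code p' w Ast := ⟨wst, hAst, hwpre, hwne⟩
    obtain ⟨y, hy, hstamps⟩ :=
      chain_reach hcode p' (Ast - τ₀) w τ₀ Ast le_rfl (by omega) hext
    -- the survivor
    have hyparse : parseA code p' ([], 0) (x ++ y) = some (wst, Ast + 1) := by
      rw [parseA_append, hstable]
      simpa [wordAtV_eq hcode hAst] using hy
    refine ⟨⟨x ++ y⟩, ?_, x ++ y, by simp, (wst, Ast + 1), hyparse, ?_⟩
    · -- NF membership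
      intro f hf hpre
      rcases List.prefix_or_prefix_of_prefix hpre (List.prefix_append x y) with hfx | hxf
      · exact huF f hf (hfx.trans hxu)
      · obtain ⟨f', rfl⟩ := hxf
        cases f' with
        | nil => exact huF (x ++ []) hf (by simpa using hxu)
        | cons v₀ f'' =>
          have hf'y : (v₀ :: f'') <+: y := (List.prefix_append_right_inj x).1 hpre
          have hv₀y : v₀ ∈ y := by
            obtain ⟨t, ht⟩ := hf'y
            rw [← ht]; simp
          obtain ⟨hst1, hst2⟩ := hstamps v₀ hv₀y
          -- stamp of v₀ is ≥ m
          have hstm : m ≤ v₀ / 2 := by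
            by_contra hlt
            push_neg at hlt
            obtain ⟨e', he', hwe', hne'⟩ := hst2
            have : p (v₀ / 2) = code e' + 1 := by rw [← hagree _ hlt]; exact he'
            exact hne' (hleaf.2 e' ⟨v₀ / 2, this⟩ hwe').symm
          -- but v₀ is an entry of f, hence small
          have hv₀f : v₀ ∈ x ++ v₀ :: f'' := by simp
          have := entry_le_maxEntry hf hv₀f
          omega
    · rw [LeafOf, ← hTeq']
      exact hwstleaf

end CertSec

/-! ### K: correctness and continuity -/

section Ksec

variable {code : List Bool → ℕ} {encF : Finset (List ℕ) → ℕ}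

theorem Kfun_names (hcode : Function.Injective code)
    {p : ℕ → ℕ} (hp : Valid1 code p) :
    S0ClosedName encF (Apts code p) (Kfun code encF p) := by
  unfold S0ClosedName Enumerates
  ext n
  simp only [Set.mem_setOf_eq]
  constructor
  · rintro ⟨F, rfl, hne⟩
    obtain ⟨m, hm⟩ := cert_lemma hcode hne
    refine ⟨Nat.pair (encF F) m, ?_⟩
    rw [Kfun]
    simp only [Nat.unpair_pair]
    rw [if_pos ⟨F, rfl, hm⟩]
  · rintro ⟨k, hk⟩
    rw [Kfun] at hk
    by_cases hcond : ∃ F, encF F = k.unpair.1 ∧ Cert code p k.unpair.2 F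
    · rw [if_pos hcond] at hk
      obtain ⟨F, hF, hcert⟩ := hcond
      have hn : k.unpair.1 = n := by omega
      exact ⟨F, by rw [hF, hn], hcert p hp rfl⟩
    · rw [if_neg hcond] at hk
      omega

theorem Cert_congr {p p₂ : ℕ → ℕ} {m : ℕ} (h : trunc p m = trunc p₂ m)
    (F : Finset (List ℕ)) : Cert code p m F ↔ Cert code p₂ m F := by
  unfold Cert
  constructor <;> intro hc p' hv htr
  · exact hc p' hv (htr.trans h.symm)
  · exact hc p' hv (htr.trans h)

theorem Kfun_coord_congr {p p₂ : ℕ → ℕ} (n : ℕ)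
    (h : trunc p n.unpair.2 = trunc p₂ n.unpair.2) :
    Kfun code encF p n = Kfun code encF p₂ n := by
  unfold Kfun
  refine if_congr ?_ rfl rfl
  constructor <;> rintro ⟨F, hF, hc⟩
  · exact ⟨F, hF, (Cert_congr h F).1 hc⟩
  · exact ⟨F, hF, (Cert_congr h F).2 hc⟩

noncomputable def extN (N : ℕ) (a : Fin N → ℕ) : ℕ → ℕ :=
  fun i => if h : i < N then a ⟨i, h⟩ else 0

theorem trunc_extN (N : ℕ) (p : ℕ → ℕ) :
    trunc (extN N (fun i => p i)) N = trunc p N := by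
  funext i
  by_cases h : i < N <;> simp [trunc, extN, h]

theorem Kfun_continuous : Continuous (Kfun code encF) := by
  apply continuous_pi
  intro n
  have hfact : (fun p => Kfun code encF p n) =
      (fun a : Fin n.unpair.2 → ℕ => Kfun code encF (extN _ a) n) ∘
        (fun p (i : Fin n.unpair.2) => p i.1) := by
    funext p
    exact Kfun_coord_congr n (trunc_extN _ p).symm
  rw [hfact]
  exact continuous_of_discreteTopology.comp (continuous_pi fun i => continuous_apply i.1)

end Ksec

/-! ### Helpers for the liveness argument -/

section LiveHelp

variable {code : List Bool → ℕ} {encF : Finset (List ℕ) → ℕ}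

theorem otherL_ne (ℓ : ℕ) : otherL ℓ ≠ ℓ := by
  unfold otherL
  by_cases h : ℓ % 2 = 0
  · rw [if_pos h]; omega
  · rw [if_neg h]; omega

/-- The deviating letter string at position `i` of `x₀`. -/
def dvt (x₀ : List ℕ) (i : ℕ) : List ℕ := x₀.take i ++ [otherL (x₀.getD i 0)]

theorem take_succ_getD {α : Type*} {d : α} {x₀ : List α} {i : ℕ} (hi : i < x₀.length) :
    x₀.take (i + 1) = x₀.take i ++ [x₀.getD i d] := by
  rw [List.take_succ]
  congr 1
  rw [List.getElem?_eq_getElem hi]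
  simp [List.getD_eq_getElem?_getD, List.getElem?_eq_getElem hi]

theorem dvt_not_prefix {x₀ : List ℕ} {u : S0} (hx₀ : x₀ <+: u.val) {i : ℕ}
    (hi : i < x₀.length) : ¬ dvt x₀ i <+: u.val := by
  intro hpre
  have h1 : x₀.take (i + 1) <+: u.val := (List.take_prefix _ _).trans hx₀
  rw [take_succ_getD hi] at h1
  have hlen1 : (x₀.take i ++ [x₀.getD i 0]).length = i + 1 := by
    simp [List.length_take]
    omega
  have hlen2 : (dvt x₀ i).length = i + 1 := by
    simp [dvt, List.length_take]
    omega
  have e1 := List.prefix_iff_eq_take.1 h1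
  have e2 := List.prefix_iff_eq_take.1 hpre
  rw [hlen1] at e1
  rw [hlen2] at e2
  unfold dvt at e2
  have : x₀.take i ++ [x₀.getD i 0] = x₀.take i ++ [otherL (x₀.getD i 0)] := by
    rw [e1, e2]
  have h2 := List.append_cancel_left this
  simp at h2
  exact otherL_ne _ h2.symm

theorem name_fact {u : S0} {q : ℕ → ℕ} (hq : S0PointName encF u q) {d : List ℕ}
    (hd : ¬ d <+: u.val) : ∃ κ, q κ = encF {d} + 1 := by
  have hmem : encF {d} ∈ {n | ∃ F, encF F = n ∧ u ∈ NF F} := by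
    refine ⟨{d}, rfl, fun f hf => ?_⟩
    rw [Finset.mem_singleton] at hf
    subst hf
    exact hd
  rw [S0PointName, Enumerates] at hq
  rw [hq] at hmem
  exact hmem

theorem name_fact_rev (hencF : Function.Injective encF) {u' : S0} {q' : ℕ → ℕ}
    (hq' : S0PointName encF u' q') {d : List ℕ} {κ : ℕ}
    (h : q' κ = encF {d} + 1) : ¬ d <+: u'.val := by
  have hmem : encF {d} ∈ {n | ∃ k, q' k = n + 1} := ⟨κ, h⟩
  rw [S0PointName, Enumerates] at hq'
  rw [← hq'] at hmem
  obtain ⟨F, hF, hNF⟩ := hmem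
  have hFd : F = {d} := hencF hF
  subst hFd
  exact hNF d (Finset.mem_singleton_self d)

theorem bounded_choice {R : ℕ → ℕ → Prop} :
    ∀ P : ℕ, (∀ i < P, ∃ κ, R i κ) → ∃ B, ∀ i < P, ∃ κ < B, R i κ := by
  intro P
  induction P with
  | zero => exact fun _ => ⟨0, by omega⟩
  | succ P ih =>
    intro h
    obtain ⟨B, hB⟩ := ih fun i hi => h i (by omega)
    obtain ⟨κP, hκP⟩ := h P (by omega)
    refine ⟨max B (κP + 1), fun i hi => ?_⟩
    rcases Nat.lt_or_ge i P with h' | h'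
    · obtain ⟨κ, hκ1, hκ2⟩ := hB i h'
      exact ⟨κ, by omega, hκ2⟩
    · have hiP : i = P := by omega
      subst hiP
      exact ⟨κP, by omega, hκP⟩

end LiveHelp

/-! ### The liveness theorem -/

section Liveness

variable {code : List Bool → ℕ} {encF : Finset (List ℕ) → ℕ}

theorem safe_eventually (hcode : Function.Injective code) (hencF : Function.Injective encF)
    {p q : ℕ → ℕ} {u : S0} (hq : S0PointName encF u q)
    {x₀ : List ℕ} {w : List Bool} {τ₀ : ℕ}
    (hx₀ : x₀ <+: u.val) (hparse : parseA code p ([], 0) x₀ = some (w, τ₀))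
    (hleaf : LeafOf code p w) {j : ℕ} :
    ∃ KK, ∀ k, KK ≤ k → Safe code encF p q k (w.take j) := by
  obtain ⟨kw, hkw⟩ := hleaf.1
  -- intermediate states of the parse of x₀
  have hstates : ∀ i, i ≤ x₀.length → ∃ s : List Bool × ℕ,
      parseA code p ([], 0) (x₀.take i) = some s ∧
        parseA code p s (x₀.drop i) = some (w, τ₀) := by
    intro i hi
    obtain ⟨s, hs1, hs2⟩ := parseA_of_prefix (List.take_prefix i x₀) hparse
    rw [List.length_take, min_eq_left hi] at hs2
    exact ⟨s, hs1, hs2⟩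
  -- the kill bound
  obtain ⟨B, hB⟩ := bounded_choice x₀.length
    (fun i hi => name_fact hq (dvt_not_prefix hx₀ hi))
  refine ⟨max B (max (kw + 1) (τ₀ + 1)), fun k hk => ?_⟩
  intro p' q' u' w' htp htq hq' hword
  have hpa : ∀ i < k, p' i = p i := trunc_eq_iff htp
  have hqa : ∀ i < k, q' i = q i := trunc_eq_iff htq
  obtain ⟨x', τ', hx'u', hparse', hleaf'⟩ := hword
  have hτ₀k : τ₀ < k := by omega
  -- w belongs to the tree of p'
  have hwT' : w ∈ TreeOf code p' := ⟨kw, by rw [hpa kw (by omega)]; exact hkw⟩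
  -- stability of initial parse segments
  have hstab : ∀ i, i ≤ x₀.length →
      ∀ s : List Bool × ℕ, parseA code p ([], 0) (x₀.take i) = some s →
        parseA code p' ([], 0) (x₀.take i) = some s := by
    intro i hi s hs
    obtain ⟨s₁, hs1, hs2⟩ := hstates i hi
    have e : s₁ = s := Option.some_inj.1 (hs1.symm.trans hs)
    subst e
    have hsτ : s₁.2 ≤ τ₀ := parseA_tau_mono hs2
    exact parseA_congr hs1 fun j' _ hj' => hpa j' (by omega)
  rcases list_tri x' x₀ with hA | hAA | ⟨z, a, b, t, t', hab, hxz, hyz⟩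
  · -- x' is a prefix of x₀ : the candidate must agree with w
    have hlen : x'.length ≤ x₀.length := hA.length_le
    have hxtake : x' = x₀.take x'.length := List.prefix_iff_eq_take.1 hA
    obtain ⟨si, hsi, hsirest⟩ := hstates x'.length hlen
    have hstab' : parseA code p' ([], 0) x' = some si := by
      rw [hxtake]
      exact hstab _ hlen _ hsi
    have hey : si = (w', τ') := Option.some_inj.1 (hstab'.symm.trans hparse')
    have hsiw : si.1 <+: w := parseA_word_mono hcode hsirest
    have hw'si : w' = si.1 := by rw [hey]
    have hww' : w = w' := hleaf'.2 w hwT' (by rw [hw'si]; exact hsiw)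
    rw [← hww']
    exact List.take_prefix j w
  · -- x₀ is a prefix of x' : the candidate extends w
    obtain ⟨s₁, hs1, hs2⟩ := parseA_of_prefix hAA hparse'
    have hstab' : parseA code p' ([], 0) x₀ = some (w, τ₀) := by
      have := hstab x₀.length le_rfl (w, τ₀) (by rw [List.take_length]; exact hparse)
      rw [List.take_length] at this
      exact this
    rw [hstab'] at hs1
    obtain rfl := Option.some_inj.1 hs1
    have : w <+: w' := parseA_word_mono hcode hs2
    exact (List.take_prefix j w).trans this
  · -- genuine split: killed by a denial
    exfalso
    have hi : z.length < x₀.length := by rw [hyz]; simp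
    have hztake : z = x₀.take z.length := by
      rw [hyz, List.take_left]
    obtain ⟨si, hsi, hsirest⟩ := hstates z.length hi.le
    have hdropb : x₀.drop z.length = b :: t' := by rw [hyz, List.drop_left]
    rw [hdropb] at hsirest
    -- the p-step at the split point
    simp only [parseA] at hsirest
    rcases hsb : step code p si b with _ | sb
    · rw [hsb] at hsirest; exact absurd hsirest (by simp)
    rw [hsb] at hsirest
    -- b's stamp is below τ₀
    have hbτ : b / 2 < τ₀ := by
      have h1 := (step_tau hsb).2
      have h2 := parseA_tau_mono hsirest
      omega
    -- the p'-step at the split point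
    have hstabz : parseA code p' ([], 0) z = some si := by
      rw [hztake]; exact hstab _ hi.le _ hsi
    obtain ⟨s₁, hs1, hs2⟩ := parseA_of_prefix (show z <+: x' from ⟨a :: t, by rw [hxz]⟩) hparse'
    rw [hstabz] at hs1
    obtain rfl := Option.some_inj.1 hs1
    have hdropa : x'.drop z.length = a :: t := by rw [hxz, List.drop_left]
    rw [hdropa] at hs2
    simp only [parseA] at hs2
    rcases hsa : step code p' si a with _ | sa
    · rw [hsa] at hs2; exact absurd hs2 (by simp)
    rw [hsa] at hs2
    -- stamps agree
    obtain ⟨⟨ha1, ha2, ha3⟩, -⟩ := step_eq_some hsa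
    obtain ⟨⟨hb1, hb2, hb3⟩, -⟩ := step_eq_some hsb
    have hstamp : a / 2 = b / 2 := by
      rcases lt_trichotomy (a / 2) (b / 2) with hlt | heq | hgt
    -- a/2 < b/2 : a's announcement also exists for p, contradicting b's minimality
      · exfalso
        have hak : a / 2 < k := by omega
        have : isExtAnn code p si.1 (a / 2) := (isExtAnn_congr (hpa _ hak)).1 ha2
        exact hb3 _ ha1 hlt this
      · exact heq
      · exfalso
        have hbk : b / 2 < k := by omega
        have : isExtAnn code p' si.1 (b / 2) := (isExtAnn_congr (hpa _ hbk)).2 hb2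
        exact ha3 _ hb1 hgt this
    -- hence a is the deviating letter
    have haother : a = otherL b := otherL_spec hstamp.symm (fun h => hab h.symm)
    have hbgetD : x₀.getD z.length 0 = b := by
      rw [List.getD_eq_getElem?_getD, hyz]
      rw [List.getElem?_append_right le_rfl]
      simp
    have hdvt : dvt x₀ z.length = z ++ [a] := by
      rw [dvt, hbgetD, ← hztake, haother]
    -- the denial kills the deviant
    obtain ⟨κ, hκB, hκ⟩ := hB z.length hi
    have hκk : κ < k := by omega
    have hq'κ : q' κ = encF {dvt x₀ z.length} + 1 := by rw [hqa κ hκk]; exact hκ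
    refine name_fact_rev hencF hq' hq'κ ?_
    rw [hdvt]
    exact (show z ++ [a] <+: x' from ⟨t, by rw [hxz]; simp⟩).trans hx'u'

end Liveness

/-! ### The march of E towards the answer -/

section March

variable {code : List Bool → ℕ} {encF : Finset (List ℕ) → ℕ}

theorem Egrow_succ (p q : ℕ → ℕ) (k : ℕ) :
    Egrow code encF p q (k + 1) =
      if Safe code encF p q (k + 1) (Egrow code encF p q k ++ [true]) then
        Egrow code encF p q k ++ [true]
      else if Safe code encF p q (k + 1) (Egrow code encF p q k ++ [false]) then
        Egrow code encF p q k ++ [false]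
      else Egrow code encF p q k := rfl

theorem Safe_self {p q : ℕ → ℕ} {k : ℕ} {c : List Bool}
    (hS : Safe code encF p q k c) {u : S0} (hq : S0PointName encF u q)
    {w : List Bool} (hw : WordAt code p u w) : c <+: w :=
  hS p q u w rfl rfl hq hw

variable {p q : ℕ → ℕ} {u : S0} {w : List Bool}

theorem Egrow_prefix (hq : S0PointName encF u q) (hw : WordAt code p u w) :
    ∀ k, Egrow code encF p q k <+: w := by
  intro k
  induction k with
  | zero => simp [Egrow]
  | succ k ih =>
    rw [Egrow_succ]
    split_ifs with h1 h2
    · exact Safe_self h1 hq hw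
    · exact Safe_self h2 hq hw
    · exact ih

theorem Egrow_stay (hq : S0PointName encF u q) (hw : WordAt code p u w)
    {k : ℕ} (hEk : Egrow code encF p q k = w) : Egrow code encF p q (k + 1) = w := by
  rw [Egrow_succ, hEk]
  split_ifs with h1 h2
  · exfalso
    have := (Safe_self h1 hq hw).length_le
    simp at this
  · exfalso
    have := (Safe_self h2 hq hw).length_le
    simp at this
  · rfl

theorem prefix_same_length_eq {α : Type*} {l₁ l₂ l : List α}
    (h1 : l₁ <+: l) (h2 : l₂ <+: l) (hlen : l₁.length = l₂.length) : l₁ = l₂ := by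
  rw [List.prefix_iff_eq_take.1 h1, List.prefix_iff_eq_take.1 h2, hlen]

theorem Egrow_reaches (hcode : Function.Injective code) (hencF : Function.Injective encF)
    (hq : S0PointName encF u q) {x₀ : List ℕ} {τ₀ : ℕ}
    (hx₀ : x₀ <+: u.val) (hparse : parseA code p ([], 0) x₀ = some (w, τ₀))
    (hleaf : LeafOf code p w) :
    ∃ N, ∀ k, N ≤ k → Egrow code encF p q k = w := by
  have hw : WordAt code p u w := ⟨x₀, τ₀, hx₀, hparse, hleaf⟩
  -- a uniform bound for safety of all prefixes of w
  obtain ⟨B, hB⟩ := bounded_choice (R := fun j κ => ∀ k, κ ≤ k →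
      Safe code encF p q k (w.take j)) (w.length + 1)
    (fun j _ => safe_eventually hcode hencF hq hx₀ hparse hleaf)
  have hBsafe : ∀ j ≤ w.length, ∀ k, B ≤ k → Safe code encF p q k (w.take j) := by
    intro j hj k hk
    obtain ⟨κ, hκB, hκ⟩ := hB j (by omega)
    exact hκ k (by omega)
  -- march
  have hmarch : ∀ d, Egrow code encF p q (B + d) = w ∨
      d ≤ (Egrow code encF p q (B + d)).length := by
    intro d
    induction d with
    | zero => right; omega
    | succ d ih =>
      by_cases hEw : Egrow code encF p q (B + d) = w
      · left
        have : B + (d + 1) = (B + d) + 1 := by omega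
        rw [this]
        exact Egrow_stay hq hw hEw
      · have hlen : d ≤ (Egrow code encF p q (B + d)).length := by
          rcases ih with h | h
          · exact absurd h hEw
          · exact h
        right
        set Ek := Egrow code encF p q (B + d) with hEk
        have hpre : Ek <+: w := Egrow_prefix hq hw _
        have hlt : Ek.length < w.length := by
          rcases lt_or_eq_of_le hpre.length_le with h | h
          · exact h
          · exact absurd (hpre.eq_of_length h) hEw
        have htake : Ek = w.take Ek.length := List.prefix_iff_eq_take.1 hpre
        have hsucc : w.take (Ek.length + 1) = Ek ++ [w.getD Ek.length false] := by
          rw [take_succ_getD hlt, ← htake]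
        have hsafe : Safe code encF p q (B + d + 1) (w.take (Ek.length + 1)) :=
          hBsafe _ (by omega) _ (by omega)
        have harith : B + (d + 1) = (B + d) + 1 := by omega
        rw [harith, Egrow_succ, ← hEk]
        rcases hbool : w.getD Ek.length false with _ | _
        · -- next letter is false
          have hnotrue : ¬ Safe code encF p q (B + d + 1) (Ek ++ [true]) := by
            intro hcon
            have h1 : Ek ++ [true] <+: w := Safe_self hcon hq hw
            have h2 : Ek ++ [false] <+: w := by
              rw [← hbool, ← hsucc]
              exact List.take_prefix _ _
            have := prefix_same_length_eq h1 h2 (by simp)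
            simp at this
          rw [if_neg hnotrue, if_pos (show Safe code encF p q (B + d + 1) (Ek ++ [false]) by
            rw [hsucc, hbool] at hsafe; exact hsafe)]
          simp
          omega
        · -- next letter is true
          rw [if_pos (by rw [hsucc, hbool] at hsafe; exact hsafe)]
          simp
          omega
  -- conclude
  have hfin : Egrow code encF p q (B + w.length + 1) = w := by
    rcases hmarch (w.length + 1) with h | h
    · have : B + w.length + 1 = B + (w.length + 1) := by omega
      rw [this]
      exact h
    · exfalso
      have hpre : Egrow code encF p q (B + (w.length + 1)) <+: w :=
        Egrow_prefix hq hw _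
      have := hpre.length_le
      omega
  refine ⟨B + w.length + 1, fun k hk => ?_⟩
  induction k with
  | zero => omega
  | succ k ih =>
    rcases Nat.lt_or_ge (B + w.length + 1) (k + 1) with h | h
    · exact Egrow_stay hq hw (ih (by omega))
    · have : k + 1 = B + w.length + 1 := by omega
      rw [this]
      exact hfin

end March

/-! ### Decoding H's output -/

section Decode

variable {code : List Bool → ℕ} {encF : Finset (List ℕ) → ℕ}

theorem Hfun_decode (p q : ℕ → ℕ) :
    ∀ n, decodePairs (Hfun code encF (p, q)) n = Egrow code encF p q n := by
  intro n
  induction n with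
  | zero => rfl
  | succ n ih =>
    rw [decodePairs, ih]
    have e0 : 2 * n / 2 = n := by omega
    have e1 : (2 * n + 1) / 2 = n := by omega
    have m0 : 2 * n % 2 = 0 := by omega
    have m1 : (2 * n + 1) % 2 = 1 := by omega
    by_cases hgrow : Egrow code encF p q (n + 1) = Egrow code encF p q n
    · have h0 : Hfun code encF (p, q) (2 * n) = false := by
        simp only [Hfun, e0]
        rw [if_pos hgrow]
      have h1 : Hfun code encF (p, q) (2 * n + 1) = false := by
        simp only [Hfun, e1]
        rw [if_pos hgrow]
      rw [h0, h1, hgrow]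
      simp [pairLetter]
    · by_cases hS : Safe code encF p q (n + 1) (Egrow code encF p q n ++ [true])
      · have h0 : Hfun code encF (p, q) (2 * n) = false := by
          simp only [Hfun, e0]
          rw [if_neg hgrow, if_pos m0, if_pos hS]
          rfl
        have h1 : Hfun code encF (p, q) (2 * n + 1) = true := by
          simp only [Hfun, e1]
          rw [if_neg hgrow, if_neg (by omega : ¬ (2 * n + 1) % 2 = 0), if_pos hS]
        rw [h0, h1]
        rw [Egrow_succ, if_pos hS]
        simp [pairLetter]
      · have hS2 : Safe code encF p q (n + 1) (Egrow code encF p q n ++ [false]) := by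
          by_contra hS2
          exact hgrow (by rw [Egrow_succ, if_neg hS, if_neg hS2])
        have h0 : Hfun code encF (p, q) (2 * n) = true := by
          simp only [Hfun, e0]
          rw [if_neg hgrow, if_pos m0, if_neg hS]
          rfl
        have h1 : Hfun code encF (p, q) (2 * n + 1) = false := by
          simp only [Hfun, e1]
          rw [if_neg hgrow, if_neg (by omega : ¬ (2 * n + 1) % 2 = 0), if_neg hS]
        rw [h0, h1]
        rw [Egrow_succ, if_neg hS, if_pos hS2]
        simp [pairLetter]

theorem Hfun_correct (hcode : Function.Injective code) (hencF : Function.Injective encF)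
    {p q : ℕ → ℕ} {u : S0} {w : List Bool} (hq : S0PointName encF u q)
    {x₀ : List ℕ} {τ₀ : ℕ} (hx₀ : x₀ <+: u.val)
    (hparse : parseA code p ([], 0) x₀ = some (w, τ₀)) (hleaf : LeafOf code p w) :
    DeltaS (Hfun code encF (p, q)) w := by
  obtain ⟨N, hN⟩ := Egrow_reaches hcode hencF hq hx₀ hparse hleaf
  refine ⟨N, fun m hm => ?_, ?_⟩
  · have hd : N ≤ m / 2 := by omega
    simp only [Hfun]
    rw [if_pos]
    rw [hN _ (by omega), hN _ hd]
  · rw [Hfun_decode]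
    exact hN N le_rfl

end Decode

/-! ### Continuity of H -/

section HCont

variable {code : List Bool → ℕ} {encF : Finset (List ℕ) → ℕ}

theorem trunc_weaken {p p₂ : ℕ → ℕ} {k K : ℕ} (hk : k ≤ K)
    (h : trunc p K = trunc p₂ K) : trunc p k = trunc p₂ k := by
  funext i
  by_cases hi : i < k
  · simp only [trunc, if_pos hi]
    exact trunc_eq_iff h i (by omega)
  · simp only [trunc, if_neg hi]

theorem Safe_congr {p q p₂ q₂ : ℕ → ℕ} {k : ℕ}
    (hp : trunc p k = trunc p₂ k) (hq : trunc q k = trunc q₂ k) (c : List Bool) :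
    Safe code encF p q k c ↔ Safe code encF p₂ q₂ k c := by
  unfold Safe
  constructor <;> intro h p' q' u' w' htp htq h1 h2
  · exact h p' q' u' w' (htp.trans hp.symm) (htq.trans hq.symm) h1 h2
  · exact h p' q' u' w' (htp.trans hp) (htq.trans hq) h1 h2

theorem Egrow_congr {p q p₂ q₂ : ℕ → ℕ} {K : ℕ}
    (hp : trunc p K = trunc p₂ K) (hq : trunc q K = trunc q₂ K) :
    ∀ k, k ≤ K → Egrow code encF p q k = Egrow code encF p₂ q₂ k := by
  intro k
  induction k with
  | zero => intro _; rfl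
  | succ k ih =>
    intro hk
    have e := ih (by omega)
    rw [Egrow_succ, Egrow_succ, e]
    have hS1 := Safe_congr (code := code) (encF := encF)
      (trunc_weaken hk hp) (trunc_weaken hk hq) (Egrow code encF p₂ q₂ k ++ [true])
    have hS2 := Safe_congr (code := code) (encF := encF)
      (trunc_weaken hk hp) (trunc_weaken hk hq) (Egrow code encF p₂ q₂ k ++ [false])
    rw [if_congr hS1 rfl (if_congr hS2 rfl rfl)]

theorem Hfun_coord_congr {p q p₂ q₂ : ℕ → ℕ} (m : ℕ)
    (hp : trunc p (m / 2 + 1) = trunc p₂ (m / 2 + 1))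
    (hq : trunc q (m / 2 + 1) = trunc q₂ (m / 2 + 1)) :
    Hfun code encF (p, q) m = Hfun code encF (p₂, q₂) m := by
  have e1 : Egrow code encF p q (m / 2 + 1) = Egrow code encF p₂ q₂ (m / 2 + 1) :=
    Egrow_congr hp hq _ le_rfl
  have e0 : Egrow code encF p q (m / 2) = Egrow code encF p₂ q₂ (m / 2) :=
    Egrow_congr hp hq _ (by omega)
  have hS := Safe_congr (code := code) (encF := encF) hp hq
    (Egrow code encF p₂ q₂ (m / 2) ++ [true])
  simp only [Hfun, e1, e0, hS]

theorem Hfun_continuous : Continuous (Hfun code encF) := by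
  apply continuous_pi
  intro m
  have hfact : (fun pq : (ℕ → ℕ) × (ℕ → ℕ) => Hfun code encF pq m) =
      (fun ab : (Fin (m / 2 + 1) → ℕ) × (Fin (m / 2 + 1) → ℕ) =>
        Hfun code encF (extN _ ab.1, extN _ ab.2) m) ∘
        (fun pq => (fun i => pq.1 i.1, fun i => pq.2 i.1)) := by
    funext pq
    simp only [Function.comp_apply]
    have hpq : Hfun code encF pq m = Hfun code encF (pq.1, pq.2) m := rfl
    rw [hpq]
    exact Hfun_coord_congr m (trunc_extN _ pq.1).symm (trunc_extN _ pq.2).symm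
  rw [hfact]
  refine continuous_of_discreteTopology.comp (Continuous.prodMk ?_ ?_)
  · exact continuous_pi fun i => (continuous_apply (i : ℕ)).comp continuous_fst
  · exact continuous_pi fun i => (continuous_apply (i : ℕ)).comp continuous_snd

end HCont

end FSLRed

/-- FSL is topologically Weihrauch reducible to overt choice for `S₀`. -/
theorem FSL_reducible_overt_choice_S0
    (code : List Bool → ℕ) (hcode : Function.Injective code)
    (encF : Finset (List ℕ) → ℕ) (hencF : Function.Injective encF) :
    ∃ (K : (ℕ → ℕ) → (ℕ → ℕ)) (Aset : (ℕ → ℕ) → Set S0)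
      (H : (ℕ → ℕ) × (ℕ → ℕ) → (ℕ → Bool)),
      ContinuousOn K {p | ∃ T, FSLTree T ∧ EnumeratesTree code p T} ∧
      (∀ (p : ℕ → ℕ) (T : Set (List Bool)), FSLTree T → EnumeratesTree code p T →
        (Aset p).Nonempty ∧ IsClosed (Aset p) ∧ S0ClosedName encF (Aset p) (K p)) ∧
      ContinuousOn H {pq : (ℕ → ℕ) × (ℕ → ℕ) |
        (∃ T, FSLTree T ∧ EnumeratesTree code pq.1 T) ∧
        ∃ u ∈ Aset pq.1, S0PointName encF u pq.2} ∧
      ∀ (p : ℕ → ℕ) (T : Set (List Bool)), FSLTree T → EnumeratesTree code p T →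
        ∀ (q : ℕ → ℕ) (u : S0), u ∈ Aset p → S0PointName encF u q →
          ∃ w : List Bool, DeltaS (H (p, q)) w ∧ IsLeaf T w := by
  refine ⟨FSLRed.Kfun code encF, FSLRed.Apts code, FSLRed.Hfun code encF, ?_, ?_, ?_, ?_⟩
  · exact FSLRed.Kfun_continuous.continuousOn
  · intro p T hT hE
    exact ⟨FSLRed.Apts_nonempty hcode hT hE, FSLRed.Apts_closed p,
      FSLRed.Kfun_names hcode ⟨T, hT, hE⟩⟩
  · exact FSLRed.Hfun_continuous.continuousOn
  · intro p T hT hE q u hu hq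
    obtain ⟨x, hxu, ⟨w, τ₀⟩, hparse, hleaf⟩ := hu
    refine ⟨w, FSLRed.Hfun_correct hcode hencF hq hxu hparse hleaf, ?_⟩
    have hTeq : T = FSLRed.TreeOf code p := hE
    rw [hTeq]
    exact hleaf
end

section
/- Let X be a countable topological space with a countable basis B : ℕ → Set X. Then overt choice for X is topologically Weihrauch reducible to Π⁰₂C_ℕ: there exist continuous functions K and H such that K maps every name p of a nonempty closed set A ⊆ X to a name of some Π⁰₂C_ℕ-instance S ⊆ ℕ with S nonempty, and H maps (p, n), for any n ∈ S, to a name of some point of A. -/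
/-- `B : ℕ → Set X` is a countable basis: each `B n` is open and every open set is a
union of sets `B n`. -/
def IsCountableBasis {X : Type*} [TopologicalSpace X] (B : ℕ → Set X) : Prop :=
  (∀ n, IsOpen (B n)) ∧ ∀ U : Set X, IsOpen U → ∃ S : Set ℕ, U = ⋃ n ∈ S, B n

/-- A name of a point `x` is an enumeration of `{n | x ∈ B n}`. -/
def PointName {X : Type*} (B : ℕ → Set X) (x : X) (p : ℕ → ℕ) : Prop :=
  Enumerates p {n | x ∈ B n}

/-- A name of a closed set `A` is an enumeration of `{n | B n ∩ A ≠ ∅}`. -/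
def ClosedName {X : Type*} (B : ℕ → Set X) (A : Set X) (p : ℕ → ℕ) : Prop :=
  Enumerates p {n | (B n ∩ A).Nonempty}

/-- A name of the `Π⁰₂C_ℕ`-instance `{n | ∀ i, n ∈ U i → n ∈ V i}` determined by `U, V`:
an enumeration of the coded sets, via an injective coding `c : ℕ × ℕ × ℕ → ℕ`. -/
def Pi02Name (c : ℕ × ℕ × ℕ → ℕ) (U V : ℕ → Set ℕ) (p : ℕ → ℕ) : Prop :=
  Enumerates p ({m | ∃ i n, n ∈ U i ∧ c (0, i, n) = m} ∪
    {m | ∃ i n, n ∈ V i ∧ c (1, i, n) = m})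

/-- For a countable countably-based space `X`, overt choice for `X` is topologically
Weihrauch reducible to `Π⁰₂C_ℕ`. -/
theorem overt_choice_countable_reducible_Pi02CNat
    {X : Type*} [TopologicalSpace X] [Countable X] (B : ℕ → Set X)
    (hB : IsCountableBasis B) (c : ℕ × ℕ × ℕ → ℕ) (hc : Function.Injective c) :
    ∃ (K : (ℕ → ℕ) → (ℕ → ℕ)) (Uf Vf : (ℕ → ℕ) → ℕ → Set ℕ)
      (H : (ℕ → ℕ) × ℕ → (ℕ → ℕ)),
      ContinuousOn K {p | ∃ A : Set X, A.Nonempty ∧ IsClosed A ∧ ClosedName B A p} ∧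
      (∀ (p : ℕ → ℕ) (A : Set X), A.Nonempty → IsClosed A → ClosedName B A p →
        {n : ℕ | ∀ i, n ∈ Uf p i → n ∈ Vf p i}.Nonempty ∧
        Pi02Name c (Uf p) (Vf p) (K p)) ∧
      ContinuousOn H {q : (ℕ → ℕ) × ℕ |
        (∃ A : Set X, A.Nonempty ∧ IsClosed A ∧ ClosedName B A q.1) ∧
        ∀ i, q.2 ∈ Uf q.1 i → q.2 ∈ Vf q.1 i} ∧
      ∀ (p : ℕ → ℕ) (A : Set X), A.Nonempty → IsClosed A → ClosedName B A p →
        ∀ n : ℕ, (∀ i, n ∈ Uf p i → n ∈ Vf p i) →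
          ∃ x ∈ A, PointName B x (H (p, n)) := by
  classical
  by_cases hX : Nonempty X
  · obtain ⟨x, hx⟩ := exists_surjective_nat X
    set K : (ℕ → ℕ) → ℕ → ℕ := fun p t =>
      if t % 2 = 0 then
        (if x (t / 2).unpair.2 ∈ B (t / 2).unpair.1 then
          c (0, (t / 2).unpair.1, (t / 2).unpair.2) + 1 else 0)
      else
        (if p (t / 2).unpair.1 = (t / 2).unpair.2.unpair.1 + 1 then
          c (1, (t / 2).unpair.2.unpair.1, (t / 2).unpair.2.unpair.2) + 1 else 0) with hK
    refine ⟨K, fun _ i => {n | x n ∈ B i}, fun p i => {n | ∃ k, p k = i + 1},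
      fun q j => if x q.2 ∈ B j then j + 1 else 0, ?_, ?_, ?_, ?_⟩
    · apply Continuous.continuousOn
      apply continuous_pi
      intro t
      by_cases ht : t % 2 = 0
      · simp only [hK, ht, if_true]
        exact continuous_const
      · simp only [hK, ht, if_false]
        exact (continuous_of_discreteTopology (α := ℕ)
          (f := fun v : ℕ => if v = (t / 2).unpair.2.unpair.1 + 1 then
            c (1, (t / 2).unpair.2.unpair.1, (t / 2).unpair.2.unpair.2) + 1 else 0)).comp
          (continuous_apply (t / 2).unpair.1)
    · intro p A hA hAc hp
      have key : ∀ i, (∃ k, p k = i + 1) ↔ (B i ∩ A).Nonempty := by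
        intro i
        rw [ClosedName, Enumerates, Set.ext_iff] at hp
        exact (hp i).symm
      constructor
      · obtain ⟨a, ha⟩ := hA
        obtain ⟨n, rfl⟩ := hx a
        exact ⟨n, fun i hi => (key i).2 ⟨x n, hi, ha⟩⟩
      · rw [Pi02Name, Enumerates]
        ext m
        constructor
        · rintro (⟨i, n, hn, rfl⟩ | ⟨i, n, ⟨k, hk⟩, rfl⟩)
          · refine ⟨2 * Nat.pair i n, ?_⟩
            have h1 : (2 * Nat.pair i n) % 2 = 0 := by omega
            have h2 : (2 * Nat.pair i n) / 2 = Nat.pair i n := by omega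
            have hn' : x n ∈ B i := hn
            simp [hK, h1, h2, Nat.unpair_pair, hn']
          · refine ⟨2 * Nat.pair k (Nat.pair i n) + 1, ?_⟩
            have h1 : (2 * Nat.pair k (Nat.pair i n) + 1) % 2 = 1 := by omega
            have h2 : (2 * Nat.pair k (Nat.pair i n) + 1) / 2
                = Nat.pair k (Nat.pair i n) := by omega
            simp [hK, h1, h2, Nat.unpair_pair, hk]
        · rintro ⟨t, ht⟩
          by_cases h2 : t % 2 = 0
          · simp only [hK, h2, if_true] at ht
            by_cases hm : x (t / 2).unpair.2 ∈ B (t / 2).unpair.1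
            · rw [if_pos hm] at ht
              exact Or.inl ⟨_, _, hm, by omega⟩
            · rw [if_neg hm] at ht; omega
          · simp only [hK, h2, if_false] at ht
            by_cases hm : p (t / 2).unpair.1 = (t / 2).unpair.2.unpair.1 + 1
            · rw [if_pos hm] at ht
              exact Or.inr ⟨(t / 2).unpair.2.unpair.1, (t / 2).unpair.2.unpair.2,
                ⟨_, hm⟩, by omega⟩
            · rw [if_neg hm] at ht; omega
    · apply Continuous.continuousOn
      apply continuous_pi
      intro j
      exact (continuous_of_discreteTopology (α := ℕ)
        (f := fun n : ℕ => if x n ∈ B j then j + 1 else 0)).comp continuous_snd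
    · intro p A hA hAc hp n hn
      have key : ∀ i, (∃ k, p k = i + 1) ↔ (B i ∩ A).Nonempty := by
        intro i
        rw [ClosedName, Enumerates, Set.ext_iff] at hp
        exact (hp i).symm
      have hxA : x n ∈ A := by
        rw [← hAc.closure_eq]
        rw [mem_closure_iff]
        intro U hU hxU
        obtain ⟨S, rfl⟩ := hB.2 U hU
        simp only [Set.mem_iUnion] at hxU
        obtain ⟨i, hiS, hxi⟩ := hxU
        obtain ⟨a, hai, haA⟩ := (key i).1 (hn i hxi)
        exact ⟨a, Set.mem_iUnion₂.2 ⟨i, hiS, hai⟩, haA⟩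
      refine ⟨x n, hxA, ?_⟩
      rw [PointName, Enumerates]
      ext j
      constructor
      · intro hj
        have hj' : x n ∈ B j := hj
        exact ⟨j, by simp [hj']⟩
      · rintro ⟨k, hk⟩
        dsimp only at hk
        by_cases hm : x n ∈ B k
        · rw [if_pos hm] at hk
          have : k = j := by omega
          subst this; exact hm
        · rw [if_neg hm] at hk; omega
  · refine ⟨fun _ _ => 0, fun _ _ => ∅, fun _ _ => ∅, fun _ _ => 0,
      continuous_const.continuousOn, ?_, continuous_const.continuousOn, ?_⟩
    · intro p A hA _ _
      exact absurd ⟨hA.some⟩ hX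
    · intro p A hA _ _
      exact absurd ⟨hA.some⟩ hX
end

section
/- Let X be a Hausdorff, second-countable topological space. Then X is CoPolish if and only if X is locally compact. -/
open Topology


/-- A topological space is CoPolish if it is the direct limit of a monotone sequence of
compact metrizable subspaces: there is a monotone sequence `K` of compact sets, each
metrizable in the subspace topology, covering `X`, such that a set is open iff its
intersection with each `K n` is open in the subspace topology of `K n`. -/
def CoPolish (X : Type*) [TopologicalSpace X] : Prop :=
  ∃ K : ℕ → Set X, Monotone K ∧ (∀ n, IsCompact (K n)) ∧
    (∀ n, TopologicalSpace.MetrizableSpace (K n)) ∧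
    (⋃ n, K n) = Set.univ ∧
    ∀ U : Set X, IsOpen U ↔ ∀ n, IsOpen ((Subtype.val : K n → X) ⁻¹' U)

/-- A Hausdorff second-countable space is CoPolish iff it is locally compact. -/
theorem coPolish_iff_locallyCompact (X : Type*) [TopologicalSpace X] [T2Space X]
    [SecondCountableTopology X] :
    CoPolish X ↔ LocallyCompactSpace X := by
  constructor
  · rintro ⟨K, hmono, hcomp, _hmet, _hcover, hopen⟩
    have hW : WeaklyLocallyCompactSpace X := by
      constructor
      intro x
      by_contra h
      push_neg at h
      obtain ⟨U, hUb⟩ := Filter.exists_antitone_basis (𝓝 x)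
      have hx : ∀ n, ∃ z, z ∈ U n ∧ z ∉ K n ∧ z ≠ x := by
        intro n
        by_contra hne
        push_neg at hne
        refine h (K n ∪ {x}) ((hcomp n).union isCompact_singleton) ?_
        filter_upwards [hUb.mem n] with z hz
        by_cases hzK : z ∈ K n
        · exact Or.inl hzK
        · exact Or.inr (hne z hz hzK)
      choose y hyU hyK hyx using hx
      have hC : IsOpen (Set.range y)ᶜ := by
        rw [hopen]
        intro m
        have heq : (Subtype.val : K m → X) ⁻¹' (Set.range y)ᶜ =
            ((Subtype.val : K m → X) ⁻¹' (y '' Set.Iio m))ᶜ := by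
          ext z
          simp only [Set.mem_preimage, Set.mem_compl_iff, Set.mem_range, Set.mem_image]
          constructor
          · rintro hz ⟨n, _, he⟩; exact hz ⟨n, he⟩
          · rintro hz ⟨n, he⟩
            rcases lt_or_ge n m with h' | h'
            · exact hz ⟨n, h', he⟩
            · exact hyK n (by rw [he]; exact hmono h' z.2)
        rw [heq]
        have hcl : IsClosed (y '' Set.Iio m) :=
          ((Set.finite_Iio m).image y).isClosed
        exact (hcl.preimage continuous_subtype_val).isOpen_compl
      have hxC : x ∈ (Set.range y)ᶜ := by
        rintro ⟨n, rfl⟩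
        exact hyx n rfl
      obtain ⟨n, -, hn⟩ := hUb.toHasBasis.mem_iff.mp (hC.mem_nhds hxC)
      exact (hn (hyU n)) ⟨n, rfl⟩
    infer_instance
  · intro hlc
    have K := CompactExhaustion.choice X
    refine ⟨fun n => K n, fun a b hab => K.subset hab, fun n => K.isCompact n, ?_, K.iUnion_eq, ?_⟩
    · intro n
      haveI : CompactSpace (K n) := isCompact_iff_compactSpace.mp (K.isCompact n)
      infer_instance
    · intro U
      constructor
      · intro hU n; exact hU.preimage continuous_subtype_val
      · intro h
        rw [isOpen_iff_forall_mem_open]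
        intro x hxU
        obtain ⟨n, hn⟩ := K.exists_mem x
        have hx' : x ∈ interior (K (n + 1)) := K.subset_interior_succ n hn
        obtain ⟨V, hVopen, hV⟩ := isOpen_induced_iff.mp (h (n + 1))
        refine ⟨V ∩ interior (K (n + 1)), ?_, hVopen.inter isOpen_interior, ?_, hx'⟩
        · rintro z ⟨hzV, hzI⟩
          have hzK : z ∈ K (n + 1) := interior_subset hzI
          have : (⟨z, hzK⟩ : K (n + 1)) ∈ Subtype.val ⁻¹' U := hV ▸ hzV
          exact this
        · have hxK : x ∈ K (n + 1) := interior_subset hx'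
          have : (⟨x, hxK⟩ : K (n + 1)) ∈ Subtype.val ⁻¹' V := hV.symm ▸ hxU
          exact this
end

section
/- Let X be a Hausdorff CoPolish space that is Fréchet–Urysohn. Then the set X_ω = {x ∈ X | the neighborhood filter of x is countably generated (x has a countable neighborhood basis)} is open in X. -/
open Filter Topology TopologicalSpace

/-- In a Hausdorff Fréchet–Urysohn CoPolish space, the set of points with a countable
neighbourhood basis is open. -/
theorem isOpen_countablyGenerated_of_coPolish {X : Type*} [TopologicalSpace X] [T2Space X]
    [FrechetUrysohnSpace X] (h : CoPolish X) :
    IsOpen {x : X | (nhds x).IsCountablyGenerated} := by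
  obtain ⟨K, hmono, hcomp, hmetr, hcover, hopen⟩ := h
  have key : {x : X | (nhds x).IsCountablyGenerated} = ⋃ n, interior (K n) := by
    ext x
    simp only [Set.mem_setOf_eq, Set.mem_iUnion]
    constructor
    · intro hx
      by_contra hno
      push_neg at hno
      have hK : ∀ n, K n ∉ 𝓝 x := fun n hn => hno n (mem_interior_iff_mem_nhds.2 hn)
      obtain ⟨U, hU⟩ := (𝓝 x).exists_antitone_basis
      -- pick N with x ∈ K N
      obtain ⟨N, hN⟩ : ∃ N, x ∈ K N := by
        have : x ∈ ⋃ n, K n := hcover ▸ Set.mem_univ x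
        exact Set.mem_iUnion.1 this
      -- pick y m ∈ U m \ K m
      have hpick : ∀ m, ∃ y, y ∈ U m ∧ y ∉ K m := by
        intro m
        by_contra hc
        push_neg at hc
        exact hK m (Filter.mem_of_superset (hU.mem m) hc)
      choose y hyU hyK using hpick
      set A : Set X := (fun k => y (N + k)) '' Set.univ with hA
      -- y m ∈ K n → m < n
      have hlt : ∀ m n, y m ∈ K n → m < n := by
        intro m n hmn
        by_contra hle
        push_neg at hle
        exact hyK m (hmono hle hmn)
      have hAclosed : IsClosed A := by
        rw [← isOpen_compl_iff, hopen]
        intro n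
        have heq : (Subtype.val : K n → X) ⁻¹' Aᶜ = ((Subtype.val : K n → X) ⁻¹' A)ᶜ := rfl
        rw [heq, isOpen_compl_iff]
        have hfinS : (A ∩ K n).Finite := by
          apply Set.Finite.subset ((Set.finite_Iio n).image (fun k => y (N + k)))
          rintro a ⟨⟨k, -, rfl⟩, haK⟩
          exact ⟨k, Set.mem_Iio.mpr (lt_of_le_of_lt (Nat.le_add_left k N) (hlt (N + k) n haK)), rfl⟩
        have hre : (Subtype.val : K n → X) ⁻¹' A = Subtype.val ⁻¹' (A ∩ K n) := by
          ext ⟨a, ha⟩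
          simp [ha]
        rw [hre]
        exact (hfinS.preimage Subtype.val_injective.injOn).isClosed
      have hxA : x ∈ A := by
        have : x ∈ closure A := by
          rw [mem_closure_iff_nhds]
          intro t ht
          obtain ⟨m, hm⟩ := hU.mem_iff.1 ht
          refine ⟨y (N + m), hm (hU.antitone (by omega) (hyU (N + m))), ⟨m, Set.mem_univ m, rfl⟩⟩
        rwa [hAclosed.closure_eq] at this
      obtain ⟨k, -, hk⟩ := hxA
      have hk' : y (N + k) = x := hk
      exact hyK (N + k) (by rw [hk']; exact hmono (Nat.le_add_right N k) hN)
    · rintro ⟨n, hn⟩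
      haveI := hmetr n
      haveI : FirstCountableTopology (K n) := inferInstance
      have hxK : x ∈ K n := interior_subset hn
      have hmem : K n ∈ 𝓝 x := mem_interior_iff_mem_nhds.1 hn
      have : 𝓝 x = Filter.map Subtype.val (𝓝 (⟨x, hxK⟩ : K n)) := by
        rw [map_nhds_subtype_val, nhdsWithin_eq_nhds.2 hmem]
      rw [this]
      infer_instance
  rw [key]
  exact isOpen_iUnion fun n => isOpen_interior
end

section
/- Let X be a Hausdorff CoPolish space that is Fréchet–Urysohn, and let X_ω = {x ∈ X | x has a countable neighborhood basis}. Then the complement X_nc = X ∖ X_ω is closed in X, is countable, and is discrete in the subspace topology. -/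
open Filter Topology Set


/-- In a Hausdorff Fréchet–Urysohn CoPolish space, the set of points without a countable
neighbourhood basis is closed, countable, and discrete in the subspace topology. -/
theorem xnc_closed_countable_discrete_of_coPolish {X : Type*} [TopologicalSpace X]
    [T2Space X] [FrechetUrysohnSpace X] (h : CoPolish X) :
    IsClosed {x : X | ¬ (nhds x).IsCountablyGenerated} ∧
    {x : X | ¬ (nhds x).IsCountablyGenerated}.Countable ∧
    DiscreteTopology {x : X | ¬ (nhds x).IsCountablyGenerated} := by
  obtain ⟨K, hmono, hcomp, hmetr, hunion, hopen⟩ := h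
  set Nc := {x : X | ¬ (nhds x).IsCountablyGenerated} with hNc
  -- Step 1: any set meeting each K n in a finite set is closed
  have hclosed_of_fin : ∀ T : Set X, (∀ n, (T ∩ K n).Finite) → IsClosed T := by
    intro T hT
    rw [← isOpen_compl_iff, hopen]
    intro n
    rw [Set.preimage_compl, isOpen_compl_iff]
    have hEq : (Subtype.val : K n → X) ⁻¹' T = Subtype.val ⁻¹' (T ∩ K n) := by
      ext ⟨x, hx⟩; simp [hx]
    rw [hEq]
    exact ((hT n).preimage Subtype.val_injective.injOn).isClosed
  -- Step 2: every compact set is contained in some K n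
  have hcpt_sub : ∀ C : Set X, IsCompact C → ∃ n, C ⊆ K n := by
    intro C hC
    by_contra hcon
    push_neg at hcon
    choose c hcC hcK using fun n => Set.not_subset.1 (hcon n)
    set S := Set.range c with hS
    have hfin : ∀ T : Set X, T ⊆ S → ∀ m, (T ∩ K m).Finite := by
      intro T hTS m
      apply ((Set.finite_Iio m).image c).subset
      rintro x ⟨hxT, hxK⟩
      obtain ⟨k, rfl⟩ := hTS hxT
      refine ⟨k, ?_, rfl⟩
      by_contra hk
      exact hcK k (hmono (le_of_not_gt hk) hxK)
    have hSclosed : IsClosed S := hclosed_of_fin S (hfin S subset_rfl)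
    have hScpt : IsCompact S := hC.of_isClosed_subset hSclosed (Set.range_subset_iff.2 hcC)
    obtain ⟨t, ht⟩ := hScpt.elim_finite_subcover (fun x : X => (S \ {x})ᶜ)
      (fun x => (hclosed_of_fin _ (hfin _ Set.diff_subset)).isOpen_compl)
      (fun y hy => Set.mem_iUnion.2 ⟨y, by simp⟩)
    have hSfinite : S.Finite := by
      apply t.finite_toSet.subset
      intro y hy
      obtain ⟨x, hxt, hyx⟩ := Set.mem_iUnion₂.1 (ht hy)
      have : y = x := by
        by_contra hne
        exact hyx ⟨hy, hne⟩
      exact this ▸ hxt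
    haveI : Finite ↥S := hSfinite
    obtain ⟨⟨x, hxS⟩, hfib⟩ := Finite.exists_infinite_fiber
      (fun k : ℕ => (⟨c k, Set.mem_range_self k⟩ : ↥S))
    have hxU : x ∈ ⋃ n, K n := hunion ▸ Set.mem_univ x
    obtain ⟨N, hN⟩ := Set.mem_iUnion.1 hxU
    have hinf : {k : ℕ | c k = x}.Infinite := by
      have : ((fun k : ℕ => (⟨c k, Set.mem_range_self k⟩ : ↥S)) ⁻¹' {⟨x, hxS⟩}).Infinite :=
        Set.infinite_coe_iff.1 hfib
      apply this.mono
      intro k hk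
      simpa [Subtype.ext_iff] using hk
    obtain ⟨m, hm, hmN⟩ := hinf.exists_gt N
    exact hcK m (hmono hmN.le (hm ▸ hN))
  -- Step 3: interior points of K n have countably generated nhds
  have hint : ∀ (x : X) (n : ℕ), x ∈ interior (K n) → (nhds x).IsCountablyGenerated := by
    intro x n hx
    haveI := hmetr n
    have hmem : ∀ᶠ y in nhds x, y ∈ K n :=
      mem_of_superset (isOpen_interior.mem_nhds hx) interior_subset
    have hmap : Filter.map Subtype.val (nhds (⟨x, interior_subset hx⟩ : K n)) = nhds x :=
      map_nhds_subtype_coe_eq_nhds _ hmem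
    rw [← hmap]
    infer_instance
  -- Step 4: Nc ∩ K n is finite for every n
  have key : ∀ n, (Nc ∩ K n).Finite := by
    intro n
    by_contra hfin
    have hinf : (Nc ∩ K n).Infinite := hfin
    let e := hinf.natEmbedding
    haveI := hmetr n
    haveI : CompactSpace (K n) := isCompact_iff_compactSpace.1 (hcomp n)
    obtain ⟨a, -, φ, hφ, hconv⟩ := isCompact_univ.isSeqCompact
      (x := fun i => (⟨(e i).1, (e i).2.2⟩ : K n)) (fun i => Set.mem_univ _)
    set y : X := a.1 with hy
    have hconvX : Tendsto (fun i => ((e (φ i)).1 : X)) atTop (nhds y) :=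
      ((continuous_subtype_val.tendsto a).comp hconv)
    have hinj : Function.Injective (fun i => ((e (φ i)).1 : X)) := by
      intro i j hij
      exact hφ.injective (e.injective (Subtype.ext hij))
    obtain ⟨I, hI⟩ : ∃ I : ℕ, ∀ i : ℕ, ((e (φ (i + I))).1 : X) ≠ y := by
      by_cases hex : ∃ i0, ((e (φ i0)).1 : X) = y
      · obtain ⟨i0, h0⟩ := hex
        refine ⟨i0 + 1, fun i hi => ?_⟩
        have : i + (i0 + 1) = i0 := hinj (hi.trans h0.symm)
        omega
      · push_neg at hex
        exact ⟨0, fun i => hex _⟩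
    set x : ℕ → X := fun i => ((e (φ (i + I))).1 : X) with hxdef
    have hxN : ∀ i, x i ∈ Nc := fun i => (e (φ (i + I))).2.1
    have hxy : ∀ i, x i ≠ y := hI
    have hx_tendsto : Tendsto x atTop (nhds y) :=
      hconvX.comp (tendsto_add_atTop_nat I)
    -- each x i is in the closure of (K m)ᶜ \ {y} for every m
    have hzcl : ∀ i, x i ∈ closure ((K i)ᶜ \ {y}) := by
      intro i
      have h1 : x i ∈ closure (K i)ᶜ := by
        rw [closure_compl]
        exact fun hmem => hxN i (hint _ i hmem)
      have h2 : closure ((K i)ᶜ) ⊆ closure ((K i)ᶜ \ {y}) ∪ {y} := by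
        calc closure ((K i)ᶜ) ⊆ closure (((K i)ᶜ \ {y}) ∪ {y}) := by
              apply closure_mono
              intro z hz
              by_cases hzy : z = y
              · exact Or.inr hzy
              · exact Or.inl ⟨hz, hzy⟩
          _ = closure ((K i)ᶜ \ {y}) ∪ {y} := by rw [closure_union, closure_singleton]
      rcases h2 h1 with h | h
      · exact h
      · exact absurd h (hxy i)
    choose z hz hztend using fun i => mem_closure_iff_seq_limit.1 (hzcl i)
    set M : Set X := ⋃ i, Set.range (z i) with hM
    have hyM : y ∈ closure M := by
      have hxM : ∀ i, x i ∈ closure M := fun i =>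
        mem_closure_of_tendsto (hztend i)
          (Eventually.of_forall fun j => Set.mem_iUnion.2 ⟨i, Set.mem_range_self j⟩)
      have := mem_closure_of_tendsto hx_tendsto (Eventually.of_forall hxM)
      rwa [closure_closure] at this
    obtain ⟨w, hwM, hwy⟩ := mem_closure_iff_seq_limit.1 hyM
    obtain ⟨Nb, hNb⟩ := hcpt_sub _ hwy.isCompact_insert_range
    have hwK : ∀ l, w l ∈ K Nb := fun l => hNb (Set.mem_insert_of_mem _ (Set.mem_range_self l))
    have hidx : ∀ l, ∃ i, i < Nb ∧ w l ∈ Set.range (z i) := by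
      intro l
      obtain ⟨i, hi⟩ := Set.mem_iUnion.1 (hwM l)
      refine ⟨i, ?_, hi⟩
      by_contra hge
      push_neg at hge
      obtain ⟨j, hj⟩ := hi
      have hwl : w l ∈ K i := hmono hge (hwK l)
      rw [← hj] at hwl
      exact (hz i j).1 hwl
    choose idx hlt hmemz using hidx
    have hfreq : ∃ i0, i0 < Nb ∧ ∃ᶠ l in atTop, idx l = i0 := by
      by_contra hcon
      push_neg at hcon
      have hev : ∀ᶠ l in atTop, ∀ i0 ∈ Finset.range Nb, idx l ≠ i0 := by
        rw [Filter.eventually_all_finset]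
        intro i0 hi0
        exact (hcon i0 (Finset.mem_range.1 hi0))
      obtain ⟨l, hl⟩ := hev.exists
      exact hl (idx l) (Finset.mem_range.2 (hlt l)) rfl
    obtain ⟨i0, _, hfr⟩ := hfreq
    have hyD : y ∈ closure (Set.range (z i0)) :=
      mem_closure_of_frequently_of_tendsto (hfr.mono fun l hl => hl ▸ hmemz l) hwy
    have hDcpt : IsCompact (insert (x i0) (Set.range (z i0))) :=
      (hztend i0).isCompact_insert_range
    have hyD' : y ∈ insert (x i0) (Set.range (z i0)) :=
      hDcpt.isClosed.closure_subset ((closure_mono (Set.subset_insert _ _)) hyD)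
    rcases hyD' with h | ⟨j, hj⟩
    · exact hxy i0 h.symm
    · exact (hz i0 j).2 hj
  -- Assemble
  refine ⟨hclosed_of_fin _ key, ?_, ?_⟩
  · have hN : Nc = ⋃ n, Nc ∩ K n := by
      rw [← Set.inter_iUnion, hunion, Set.inter_univ]
    rw [hN]
    exact Set.countable_iUnion fun n => (key n).countable
  · rw [discreteTopology_iff_isOpen_singleton]
    intro a
    have hU : IsOpen (Nc \ {a.1})ᶜ :=
      (hclosed_of_fin _ fun m => (key m).subset
        (Set.inter_subset_inter_left _ Set.diff_subset)).isOpen_compl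
    have hEq : ({a} : Set ↥Nc) = Subtype.val ⁻¹' (Nc \ {a.1})ᶜ := by
      ext b
      simp only [Set.mem_singleton_iff, Set.mem_preimage, Set.mem_compl_iff, Set.mem_diff,
        Set.mem_singleton_iff, not_and, not_not]
      constructor
      · rintro rfl; intro _; exact rfl
      · intro hb; exact Subtype.ext (hb b.2)
    rw [hEq]
    exact hU.preimage continuous_subtype_val
end

section
/- Let X be a Hausdorff CoPolish space that is Fréchet–Urysohn, and suppose the set X_nc = {x ∈ X | x has no countable neighborhood basis} is nonempty. Then there is a closed topological embedding of T_min into X (a topological embedding e : T_min → X whose range is closed in X). -/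
/-- The topology of the space `T_min` on `Option (ℕ × ℕ)`: a set `U` is open iff,
whenever `none ∈ U`, there is `ℓ : ℕ → ℕ` with `some (a, b) ∈ U` for all `a` and all
`b ≥ ℓ a` (in particular every singleton `{some (a, b)}` is open). -/
def TminTop : TopologicalSpace (Option (ℕ × ℕ)) where
  IsOpen U := none ∈ U → ∃ ℓ : ℕ → ℕ, ∀ a b : ℕ, ℓ a ≤ b → some (a, b) ∈ U
  isOpen_univ := fun _ => ⟨fun _ => 0, fun _ _ _ => trivial⟩
  isOpen_inter := by
    intro U V hU hV hmem
    obtain ⟨ℓ₁, h₁⟩ := hU hmem.1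
    obtain ⟨ℓ₂, h₂⟩ := hV hmem.2
    exact ⟨fun a => max (ℓ₁ a) (ℓ₂ a), fun a b hb =>
      ⟨h₁ a b (le_trans (le_max_left _ _) hb), h₂ a b (le_trans (le_max_right _ _) hb)⟩⟩
  isOpen_sUnion := by
    intro S hS hmem
    obtain ⟨U, hU, hnU⟩ := hmem
    obtain ⟨ℓ, hℓ⟩ := hS U hU hnU
    exact ⟨ℓ, fun a b hb => ⟨U, hU, hℓ a b hb⟩⟩

open Filter Topology

private lemma aux_inj_seq {X : Type*} [TopologicalSpace X] [T1Space X] {u : ℕ → X} {x : X}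
    (hu : Filter.Tendsto u Filter.atTop (𝓝 x)) (hne : ∀ b, u b ≠ x) :
    ∃ t : ℕ → X, Function.Injective t ∧ (∀ b, t b ∈ Set.range u) ∧
      Filter.Tendsto t Filter.atTop (𝓝 x) := by
  have hinf : (Set.range u).Infinite := by
    intro hfin
    have hx : x ∉ Set.range u := by rintro ⟨b, hb⟩; exact hne b hb
    have hev : ∀ᶠ b in Filter.atTop, u b ∈ (Set.range u)ᶜ :=
      hu (hfin.isClosed.isOpen_compl.mem_nhds hx)
    obtain ⟨b, hb⟩ := hev.exists
    exact hb (Set.mem_range_self b)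
  set f := hinf.natEmbedding with hf
  have htinj : Function.Injective (fun b => (f b : X)) :=
    Subtype.val_injective.comp f.injective
  refine ⟨fun b => (f b : X), htinj, fun b => (f b).2, ?_⟩
  rw [Filter.tendsto_def]
  intro U hU
  obtain ⟨N, hN⟩ := Filter.mem_atTop_sets.mp (hu hU)
  have hfin2 : (Set.range u \ U).Finite := by
    apply ((Set.finite_Iio N).image u).subset
    rintro z ⟨⟨j, rfl⟩, hzU⟩
    by_cases hj : j < N
    · exact ⟨j, hj, rfl⟩
    · exact absurd (hN j (le_of_not_gt hj)) hzU
  have hpre : {b : ℕ | (f b : X) ∉ U}.Finite := by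
    have hsub : {b : ℕ | (f b : X) ∉ U} ⊆ (fun b => (f b : X)) ⁻¹' (Set.range u \ U) :=
      fun b hb => ⟨(f b).2, hb⟩
    exact (hfin2.preimage htinj.injOn).subset hsub
  rw [← Nat.cofinite_eq_atTop]
  exact Filter.mem_cofinite.mpr hpre

private lemma aux_closed_insert {X : Type*} [TopologicalSpace X] [T2Space X] {u : ℕ → X} {x : X}
    (hu : Filter.Tendsto u Filter.atTop (𝓝 x)) {A : Set X} (hA : A ⊆ Set.range u) :
    IsClosed (insert x A) := by
  rw [← isOpen_compl_iff, isOpen_iff_mem_nhds]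
  intro y hy
  have hyx : y ≠ x := fun hyx => hy (hyx ▸ Set.mem_insert x A)
  have hyA : y ∉ A := fun hyA => hy (Set.mem_insert_of_mem _ hyA)
  obtain ⟨W, W', hWopen, hW'open, hyW, hxW', hd⟩ := t2_separation hyx
  obtain ⟨N, hN⟩ := Filter.mem_atTop_sets.mp (hu (hW'open.mem_nhds hxW'))
  set F := u '' Set.Iio N ∩ A with hF
  have hFfin : F.Finite := ((Set.finite_Iio N).image u).inter_of_left _
  have hyF : y ∉ F := fun hyF => hyA hyF.2
  refine Filter.mem_of_superset ((hWopen.sdiff hFfin.isClosed).mem_nhds ⟨hyW, hyF⟩) ?_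
  rintro z ⟨hzW, hzF⟩ hz
  rw [Set.mem_insert_iff] at hz
  rcases hz with rfl | hzA
  · exact (Set.disjoint_left.mp hd hzW) hxW'
  · obtain ⟨j, hj⟩ := hA hzA
    by_cases hjN : j < N
    · exact hzF ⟨⟨j, hjN, hj⟩, hzA⟩
    · exact (Set.disjoint_left.mp hd hzW) (hj ▸ hN j (le_of_not_gt hjN))

/-- If a Hausdorff Fréchet–Urysohn CoPolish space has a point with no countable
neighbourhood basis, then `T_min` embeds into it as a closed subspace. -/
theorem tmin_closed_embedding_of_coPolish {X : Type*} [TopologicalSpace X] [T2Space X]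
    [FrechetUrysohnSpace X] (h : CoPolish X)
    (hnc : {x : X | ¬ (nhds x).IsCountablyGenerated}.Nonempty) :
    ∃ e : Option (ℕ × ℕ) → X,
      @Topology.IsEmbedding (Option (ℕ × ℕ)) X TminTop _ e ∧ IsClosed (Set.range e) := by
  obtain ⟨K, hmono, hcomp, hmet, huniv, hcrit⟩ := h
  obtain ⟨x₀, hx₀⟩ := hnc
  have hclosed_crit : ∀ S : Set X, (∀ n, IsClosed ((Subtype.val : K n → X) ⁻¹' S)) →
      IsClosed S := by
    intro S hS
    rw [← isOpen_compl_iff, hcrit]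
    intro n
    rw [Set.preimage_compl]
    exact (hS n).isOpen_compl
  have hmemK : ∀ x : X, ∃ n, x ∈ K n := fun x =>
    Set.mem_iUnion.mp (huniv ▸ Set.mem_univ x)
  have hcompact_sub : ∀ C : Set X, IsCompact C → ∃ n, C ⊆ K n := by
    intro C hC
    by_contra hcon
    push_neg at hcon
    have hex : ∀ n, ∃ c, c ∈ C ∧ c ∉ K n := fun n => Set.not_subset.mp (hcon n)
    choose c hcC hcK using hex
    have hnotKlt : ∀ k n : ℕ, c k ∈ K n → k < n := by
      intro k n hk
      by_contra hle
      push_neg at hle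
      exact hcK k (hmono hle hk)
    have hVclosed : ∀ j : ℕ, IsClosed (c '' Set.Ici j) := by
      intro j
      apply hclosed_crit
      intro n
      have heq : (Subtype.val : K n → X) ⁻¹' (c '' Set.Ici j) =
          (Subtype.val : K n → X) ⁻¹' (c '' (Set.Ici j ∩ Set.Iio n)) := by
        ext y
        simp only [Set.mem_preimage, Set.mem_image, Set.mem_inter_iff, Set.mem_Ici, Set.mem_Iio]
        constructor
        · rintro ⟨k, hk, hky⟩
          exact ⟨k, ⟨hk, hnotKlt k n (hky ▸ y.2)⟩, hky⟩
        · rintro ⟨k, ⟨hk, _⟩, hky⟩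
          exact ⟨k, hk, hky⟩
      rw [heq]
      exact (((Set.finite_Iio n).subset Set.inter_subset_right |>.image c).isClosed).preimage
        continuous_subtype_val
    have hcover : C ⊆ ⋃ j : ℕ, (c '' Set.Ici j)ᶜ := by
      intro x hx
      obtain ⟨n, hn⟩ := hmemK x
      refine Set.mem_iUnion.mpr ⟨n, ?_⟩
      rintro ⟨k, hk, hkx⟩
      exact absurd (hnotKlt k n (hkx ▸ hn)) (not_lt.mpr hk)
    obtain ⟨t, ht⟩ := hC.elim_finite_subcover (fun j => (c '' Set.Ici j)ᶜ)
      (fun j => (hVclosed j).isOpen_compl) hcover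
    have hJ := ht (hcC (t.sup id))
    obtain ⟨j, hjt, hj⟩ := Set.mem_iUnion₂.mp hJ
    exact hj ⟨t.sup id, Finset.le_sup (f := id) hjt, rfl⟩
  have hKnot : ∀ n, K n ∉ 𝓝 x₀ := by
    intro n hmem
    apply hx₀
    have hx : x₀ ∈ K n := mem_of_mem_nhds hmem
    haveI := hmet n
    have h1 : 𝓝 x₀ = Filter.map Subtype.val (𝓝 (⟨x₀, hx⟩ : K n)) := by
      rw [map_nhds_subtype_val, nhdsWithin_eq_nhds.mpr hmem]
    rw [h1]
    infer_instance
  obtain ⟨n₀, hn₀⟩ := hmemK x₀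
  -- the step: a column avoiding K n
  have hstep : ∀ n, ∃ (s : ℕ → X) (n' : ℕ), n < n' ∧ Function.Injective s ∧
      (∀ b, s b ∉ K n) ∧ Filter.Tendsto s Filter.atTop (𝓝 x₀) ∧ Set.range s ⊆ K n' := by
    intro n
    set N := max n n₀ with hN
    have hxN : x₀ ∈ K N := hmono (le_max_right n n₀) hn₀
    have hcl : x₀ ∈ closure (K N)ᶜ := by
      rw [closure_compl, Set.mem_compl_iff, mem_interior_iff_mem_nhds]
      exact hKnot N
    obtain ⟨u, hu, hulim⟩ := mem_closure_iff_seq_limit.mp hcl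
    have hune : ∀ b, u b ≠ x₀ := fun b hb => hu b (hb ▸ hxN)
    obtain ⟨s, hsinj, hsrange, hslim⟩ := aux_inj_seq hulim hune
    have hs : ∀ b, s b ∉ K N := by
      intro b hb
      obtain ⟨j, hj⟩ := hsrange b
      exact hu j (hj ▸ hb)
    obtain ⟨n'', hn''⟩ := hcompact_sub _ hslim.isCompact_insert_range
    refine ⟨s, max n'' (N + 1), lt_of_lt_of_le (Nat.lt_succ_of_le (le_max_left n n₀))
      (le_max_right _ _), hsinj, fun b hb => hs b (hmono (le_max_left n n₀) hb), hslim,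
      fun y hy => hmono (le_max_left _ _) (hn'' (Set.mem_insert_of_mem _ hy))⟩
  choose stepS stepN hlt hinj hnotmem htend hrange using hstep
  set m : ℕ → ℕ := fun a => Nat.rec n₀ (fun _ prev => stepN prev) a with hm
  have hmsucc : ∀ a, m (a + 1) = stepN (m a) := fun a => rfl
  have hmmono : StrictMono m := strictMono_nat_of_lt_succ (fun a => hmsucc a ▸ hlt (m a))
  have hmn₀ : ∀ a, n₀ ≤ m a := fun a => hmmono.monotone (Nat.zero_le a)
  set s : ℕ → ℕ → X := fun a => stepS (m a) with hsdef
  have hxKm : ∀ a, x₀ ∈ K (m a) := fun a => hmono (hmn₀ a) hn₀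
  have hsnot : ∀ a b, s a b ∉ K (m a) := fun a b => hnotmem (m a) b
  have hstend : ∀ a, Filter.Tendsto (s a) Filter.atTop (𝓝 x₀) := fun a => htend (m a)
  have hsinj : ∀ a, Function.Injective (s a) := fun a => hinj (m a)
  have hsrange : ∀ a, Set.range (s a) ⊆ K (m (a + 1)) := fun a => hmsucc a ▸ hrange (m a)
  have hsne : ∀ a b, s a b ≠ x₀ := fun a b hb => hsnot a b (hb ▸ hxKm a)
  set e : Option (ℕ × ℕ) → X := fun p => Option.rec x₀ (fun q => s q.1 q.2) p with he
  have hdiff : ∀ a b a' b', a < a' → s a b ≠ s a' b' := by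
    intro a b a' b' haa heq
    have h1 : s a b ∈ K (m a') :=
      hmono (hmmono.monotone (Nat.succ_le_of_lt haa)) (hsrange a ⟨b, rfl⟩)
    exact hsnot a' b' (heq ▸ h1)
  have heinj : Function.Injective e := by
    rintro (_ | ⟨a, b⟩) (_ | ⟨a', b'⟩) hq
    · rfl
    · exact absurd hq.symm (hsne a' b')
    · exact absurd hq (hsne a b)
    · rcases lt_trichotomy a a' with hlt' | heqa | hgt
      · exact absurd hq (hdiff a b a' b' hlt')
      · subst heqa
        have hb : b = b' := hsinj a hq
        rw [hb]
      · exact absurd hq.symm (hdiff a' b' a b hgt)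
  -- if s a b lies in K n then a < n
  have hcol_mem : ∀ a b n, s a b ∈ K n → a < n := by
    intro a b n hb
    by_contra hle
    push_neg at hle
    exact hsnot a b (hmono (le_trans hle hmmono.le_apply) hb)
  have he_none : e none = x₀ := rfl
  have he_some : ∀ a b : ℕ, e (some (a, b)) = s a b := fun a b => rfl
  -- the key closedness lemma
  have hMclosed : ∀ V : Set (Option (ℕ × ℕ)),
      (none ∈ V → ∃ ℓ : ℕ → ℕ, ∀ a b : ℕ, ℓ a ≤ b → some (a, b) ∈ V) →
      IsClosed (Set.range e \ e '' V) := by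
    intro V hV
    set M := Set.range e \ e '' V with hMdef
    apply hclosed_crit
    intro n
    set D : Set X := ({x₀} \ e '' V) ∪ ⋃ a ∈ Finset.range n, (Set.range (s a) \ e '' V)
      with hDdef
    have hDM : D ⊆ M := by
      rintro z (⟨hz1, hz2⟩ | hz)
      · rw [Set.mem_singleton_iff] at hz1
        exact ⟨⟨none, hz1 ▸ he_none⟩, hz2⟩
      · simp only [Set.mem_iUnion] at hz
        obtain ⟨a, _, ⟨b, hb⟩, hz2⟩ := hz
        exact ⟨⟨some (a, b), hb ▸ he_some a b⟩, hz2⟩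
    have hMD : ∀ z ∈ M, z ∈ K n → z ∈ D := by
      rintro z ⟨⟨p, hp⟩, hz2⟩ hzK
      cases p with
      | none =>
        exact Or.inl ⟨Set.mem_singleton_iff.mpr (hp ▸ he_none).symm ▸ rfl, hz2⟩
      | some q =>
        obtain ⟨a, b⟩ := q
        rw [he_some] at hp
        have han : a < n := hcol_mem a b n (hp ▸ hzK)
        refine Or.inr (Set.mem_iUnion.mpr ⟨a, Set.mem_iUnion.mpr
          ⟨Finset.mem_range.mpr han, ⟨b, hp⟩, hz2⟩⟩)
    have hDclosed : IsClosed D := by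
      by_cases hnV : none ∈ V
      · -- x₀ ∈ e '' V, and each column part is finite
        obtain ⟨ℓ, hℓ⟩ := hV hnV
        have hx₀V : x₀ ∈ e '' V := ⟨none, hnV, he_none⟩
        have hsingle : ({x₀} \ e '' V : Set X) = ∅ := by
          ext z
          simp only [Set.mem_diff, Set.mem_singleton_iff, Set.mem_empty_iff_false, iff_false,
            not_and, not_not]
          rintro rfl
          exact hx₀V
        have hfin : D.Finite := by
          rw [hDdef, hsingle, Set.empty_union]
          refine Set.Finite.biUnion (Finset.range n).finite_toSet (fun a _ => ?_)
          refine ((Set.finite_Iio (ℓ a)).image (s a)).subset ?_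
          rintro z ⟨⟨b, rfl⟩, hz2⟩
          refine ⟨b, ?_, rfl⟩
          by_contra hb
          simp only [Set.mem_Iio, not_lt] at hb
          exact hz2 ⟨some (a, b), hℓ a b hb, he_some a b⟩
        exact hfin.isClosed
      · -- x₀ is in D; each column piece plus x₀ is closed
        have hDeq : D = {x₀} ∪ ⋃ a ∈ Finset.range n, insert x₀ (Set.range (s a) \ e '' V) := by
          have hx₀nV : x₀ ∉ e '' V := by
            rintro ⟨v, hvV, hv⟩
            have : v = none := heinj (hv.trans he_none.symm)
            exact hnV (this ▸ hvV)
          ext z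
          simp only [hDdef, Set.mem_union, Set.mem_diff, Set.mem_singleton_iff, Set.mem_iUnion,
            Set.mem_insert_iff]
          constructor
          · rintro (⟨rfl, _⟩ | ⟨a, ha, hz⟩)
            · exact Or.inl rfl
            · exact Or.inr ⟨a, ha, Or.inr hz⟩
          · rintro (rfl | ⟨a, ha, rfl | hz⟩)
            · exact Or.inl ⟨rfl, hx₀nV⟩
            · exact Or.inl ⟨rfl, hx₀nV⟩
            · exact Or.inr ⟨a, ha, hz⟩
        rw [hDeq]
        refine IsClosed.union isClosed_singleton ?_
        refine Set.Finite.isClosed_biUnion (Finset.range n).finite_toSet (fun a _ => ?_)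
        exact aux_closed_insert (hstend a) Set.diff_subset
    have hpre : (Subtype.val : K n → X) ⁻¹' M = (Subtype.val : K n → X) ⁻¹' D := by
      ext y
      exact ⟨fun hy => hMD _ hy y.2, fun hy => hDM hy⟩
    rw [hpre]
    exact hDclosed.preimage continuous_subtype_val
  -- continuity
  have hcont : ∀ U : Set X, IsOpen U → none ∈ e ⁻¹' U →
      ∃ ℓ : ℕ → ℕ, ∀ a b : ℕ, ℓ a ≤ b → some (a, b) ∈ e ⁻¹' U := by
    intro U hU hmemU
    rw [Set.mem_preimage, he_none] at hmemU
    have hev : ∀ a, ∃ N, ∀ b ≥ N, s a b ∈ U := fun a =>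
      Filter.eventually_atTop.mp ((hstend a).eventually_mem (hU.mem_nhds hmemU))
    choose ℓ hℓ using hev
    exact ⟨ℓ, fun a b hb => by rw [Set.mem_preimage, he_some]; exact hℓ a b hb⟩
  letI : TopologicalSpace (Option (ℕ × ℕ)) := TminTop
  refine ⟨e, ⟨⟨TopologicalSpace.ext_iff.mpr fun V => ?_⟩, heinj⟩, ?_⟩
  · constructor
    · intro hVopen
      refine isOpen_induced_iff.mpr ⟨(Set.range e \ e '' V)ᶜ,
        (hMclosed V hVopen).isOpen_compl, ?_⟩
      ext p
      simp only [Set.mem_preimage, Set.mem_compl_iff, Set.mem_diff, not_and, not_not]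
      constructor
      · intro hp
        obtain ⟨v, hvV, hev⟩ := hp (Set.mem_range_self p)
        rwa [← heinj hev]
      · intro hpV _
        exact ⟨p, hpV, rfl⟩
    · intro hVind
      obtain ⟨U, hUopen, hUV⟩ := isOpen_induced_iff.mp hVind
      show none ∈ V → ∃ ℓ : ℕ → ℕ, ∀ a b : ℕ, ℓ a ≤ b → some (a, b) ∈ V
      rw [← hUV]
      exact hcont U hUopen
  · have h1 := hMclosed ∅ (fun hn => absurd hn (Set.notMem_empty none))
    simpa using h1
end

section
/- Let X be a Fréchet–Urysohn topological space, let (A_n) be a sequence of nonempty closed subsets of X, and let A_∞ be a nonempty closed subset of X. Then the following are equivalent: (i) (A_n) converges to A_∞ in the lower Vietoris sense, i.e. for every open U ⊆ X with U ∩ A_∞ ≠ ∅ one has U ∩ A_n ≠ ∅ for all sufficiently large n; (ii) for every x_∞ ∈ A_∞ and every strictly increasing φ : ℕ → ℕ there exist a sequence (x_n) in X converging to x_∞ and a strictly increasing ξ : ℕ → ℕ with x_n ∈ A_{φ(ξ n)} for all n ∈ ℕ. -/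
open Filter Topology

private lemma pigeon_freq {m : ℕ → ℕ} :
    ∀ B, (∃ᶠ j in atTop, m j < B) → ∃ m₀, ∃ᶠ j in atTop, m j = m₀ := by
  intro B
  induction B with
  | zero => intro h; exact absurd h.exists (by simp)
  | succ B ih =>
    intro h
    have h' : ∃ᶠ j in atTop, m j < B ∨ m j = B := h.mono fun j hj => by omega
    rcases frequently_or_distrib.mp h' with h' | h'
    · exact ih h'
    · exact ⟨B, h'⟩

/-- In a Fréchet–Urysohn space, a sequence of nonempty closed sets converges to a nonempty
closed set `A∞` in the lower Vietoris sense iff for every `x∞ ∈ A∞` and every strictly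
increasing `φ` there are a sequence converging to `x∞` and a strictly increasing `ξ` with
`x n ∈ A (φ (ξ n))` for all `n`. -/
theorem lowerVietoris_convergence_iff_frechetUrysohn
    {X : Type*} [TopologicalSpace X] [FrechetUrysohnSpace X]
    (A : ℕ → Set X) (Ainf : Set X)
    (hA : ∀ n, (A n).Nonempty) (hAc : ∀ n, IsClosed (A n))
    (hinf : Ainf.Nonempty) (hinfc : IsClosed Ainf) :
    (∀ U : Set X, IsOpen U → (U ∩ Ainf).Nonempty →
      ∃ N : ℕ, ∀ n, N ≤ n → (U ∩ A n).Nonempty) ↔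
    (∀ x ∈ Ainf, ∀ φ : ℕ → ℕ, StrictMono φ →
      ∃ (x' : ℕ → X) (ξ : ℕ → ℕ), StrictMono ξ ∧
        Filter.Tendsto x' Filter.atTop (nhds x) ∧
        ∀ n : ℕ, x' n ∈ A (φ (ξ n))) := by
  constructor
  · intro lv x hx φ hφ
    by_cases hcase : ∃ᶠ n in atTop, x ∈ A (φ n)
    · obtain ⟨ξ, hξ, hmem⟩ := extraction_of_frequently_atTop hcase
      exact ⟨fun _ => x, ξ, hξ, tendsto_const_nhds, hmem⟩
    · rw [not_frequently] at hcase
      obtain ⟨N, hN⟩ := eventually_atTop.mp hcase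
      have hclos : x ∈ closure (⋃ n ∈ Set.Ici N, A (φ n)) := by
        rw [mem_closure_iff]
        intro U hU hxU
        obtain ⟨K, hK⟩ := lv U hU ⟨x, hxU, hx⟩
        obtain ⟨y, hyU, hyA⟩ :=
          hK (φ (max N K)) (le_trans (le_max_right N K) hφ.le_apply)
        exact ⟨y, hyU, Set.mem_biUnion (le_max_left N K) hyA⟩
      obtain ⟨y, hyM, hty⟩ := mem_closure_iff_seq_limit.mp hclos
      have hex : ∀ j, ∃ n, N ≤ n ∧ y j ∈ A (φ n) := by
        intro j
        simpa [Set.mem_iUnion] using hyM j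
      choose m hmN hmA using hex
      by_cases ht : Tendsto m atTop atTop
      · obtain ⟨g, hg, hmg⟩ := strictMono_subseq_of_tendsto_atTop ht
        exact ⟨y ∘ g, m ∘ g, hmg, hty.comp hg.tendsto_atTop, fun n => hmA (g n)⟩
      · exfalso
        rw [tendsto_atTop] at ht
        push_neg at ht
        obtain ⟨B, hB⟩ := ht
        have hB' : ∃ᶠ j in atTop, m j < B := hB.mono fun j hj => by omega
        obtain ⟨m₀, hm₀⟩ := pigeon_freq B hB'
        obtain ⟨g, hg, hmg⟩ := extraction_of_frequently_atTop hm₀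
        have hxm : x ∈ A (φ m₀) := by
          refine (hAc (φ m₀)).mem_of_tendsto (hty.comp hg.tendsto_atTop) ?_
          exact Eventually.of_forall fun j => by
            have := hmA (g j); rwa [hmg j] at this
        exact hN m₀ (hmg 0 ▸ hmN (g 0)) hxm
  · intro h U hU hUA
    by_contra hcon
    push_neg at hcon
    have hfreq : ∃ᶠ n in atTop, ¬(U ∩ A n).Nonempty := by
      rw [frequently_atTop]
      intro N
      obtain ⟨n, hn, h'⟩ := hcon N
      exact ⟨n, hn, by simp [h']⟩
    obtain ⟨φ, hφ, hφe⟩ := extraction_of_frequently_atTop hfreq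
    obtain ⟨xx, hxU, hxA⟩ := hUA
    obtain ⟨x', ξ, hξ, htx, hmem⟩ := h xx hxA φ hφ
    obtain ⟨n, hn⟩ := (htx.eventually_mem (hU.mem_nhds hxU)).exists
    exact hφe (ξ n) ⟨x' n, hn, hmem n⟩
end

section
/- In the space S_min, the point ∞∞ belongs to the closure of the set D = {(a, b) | a, b ∈ ℕ} of doubly finite points, but no sequence of points of D converges to ∞∞. Consequently, S_min is not a Fréchet–Urysohn space. -/
/-- The topology of the space `S_min` on `Option (ℕ × Option ℕ)`, where `none` is the
point `∞∞`, `some (a, none)` is `(a, ∞)` and `some (a, some b)` is `(a, b)`.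
A set `U` is open iff: whenever `(a, ∞) ∈ U` there is `b₀` with `(a, b) ∈ U` for all
`b ≥ b₀`, and whenever `∞∞ ∈ U` there are `a₀` and `ℓ : ℕ → ℕ` such that for all
`a ≥ a₀` one has `(a, ∞) ∈ U` and `(a, b) ∈ U` for all `b ≥ ℓ a`. -/
def SminTop : TopologicalSpace (Option (ℕ × Option ℕ)) where
  IsOpen U :=
    (∀ a : ℕ, some (a, none) ∈ U → ∃ b₀ : ℕ, ∀ b : ℕ, b₀ ≤ b → some (a, some b) ∈ U) ∧
    (none ∈ U → ∃ (a₀ : ℕ) (ℓ : ℕ → ℕ), ∀ a : ℕ, a₀ ≤ a →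
      some (a, none) ∈ U ∧ ∀ b : ℕ, ℓ a ≤ b → some (a, some b) ∈ U)
  isOpen_univ :=
    ⟨fun _ _ => ⟨0, fun _ _ => trivial⟩,
     fun _ => ⟨0, fun _ => 0, fun _ _ => ⟨trivial, fun _ _ => trivial⟩⟩⟩
  isOpen_inter := by
    intro U V hU hV
    constructor
    · intro a ha
      obtain ⟨b₁, h₁⟩ := hU.1 a ha.1
      obtain ⟨b₂, h₂⟩ := hV.1 a ha.2
      exact ⟨max b₁ b₂, fun b hb =>
        ⟨h₁ b (le_trans (le_max_left _ _) hb), h₂ b (le_trans (le_max_right _ _) hb)⟩⟩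
    · intro hnone
      obtain ⟨a₁, ℓ₁, h₁⟩ := hU.2 hnone.1
      obtain ⟨a₂, ℓ₂, h₂⟩ := hV.2 hnone.2
      refine ⟨max a₁ a₂, fun a => max (ℓ₁ a) (ℓ₂ a), fun a ha => ?_⟩
      have t₁ := h₁ a (le_trans (le_max_left _ _) ha)
      have t₂ := h₂ a (le_trans (le_max_right _ _) ha)
      exact ⟨⟨t₁.1, t₂.1⟩, fun b hb =>
        ⟨t₁.2 b (le_trans (le_max_left _ _) hb), t₂.2 b (le_trans (le_max_right _ _) hb)⟩⟩
  isOpen_sUnion := by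
    intro S hS
    constructor
    · intro a ha
      obtain ⟨U, hU, haU⟩ := ha
      obtain ⟨b₀, hb⟩ := (hS U hU).1 a haU
      exact ⟨b₀, fun b hb' => ⟨U, hU, hb b hb'⟩⟩
    · intro hnone
      obtain ⟨U, hU, hnU⟩ := hnone
      obtain ⟨a₀, ℓ, h⟩ := (hS U hU).2 hnU
      exact ⟨a₀, ℓ, fun a ha =>
        ⟨⟨U, hU, (h a ha).1⟩, fun b hb => ⟨U, hU, (h a ha).2 b hb⟩⟩⟩

/-- In `S_min`, the point `∞∞` is in the closure of the set of doubly finite points, but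
is not the limit of any sequence of doubly finite points; hence `S_min` is not a
Fréchet–Urysohn space. -/
theorem smin_not_frechetUrysohn :
    (none : Option (ℕ × Option ℕ)) ∈
      @closure (Option (ℕ × Option ℕ)) SminTop
        {u : Option (ℕ × Option ℕ) | ∃ a b : ℕ, u = some (a, some b)} ∧
    (¬ ∃ x : ℕ → Option (ℕ × Option ℕ),
      (∀ n, x n ∈ {u : Option (ℕ × Option ℕ) | ∃ a b : ℕ, u = some (a, some b)}) ∧
      Filter.Tendsto x Filter.atTop
        (@nhds (Option (ℕ × Option ℕ)) SminTop none)) ∧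
    ¬ @FrechetUrysohnSpace (Option (ℕ × Option ℕ)) SminTop := by
  letI : TopologicalSpace (Option (ℕ × Option ℕ)) := SminTop
  set D : Set (Option (ℕ × Option ℕ)) :=
    {u : Option (ℕ × Option ℕ) | ∃ a b : ℕ, u = some (a, some b)} with hDdef
  have h1 : (none : Option (ℕ × Option ℕ)) ∈ closure D := by
    rw [mem_closure_iff]
    intro U hU hnone
    obtain ⟨a₀, ℓ, h⟩ := hU.2 hnone
    exact ⟨some (a₀, some (ℓ a₀)), (h a₀ le_rfl).2 _ le_rfl, ⟨a₀, ℓ a₀, rfl⟩⟩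
  have h2 : ¬ ∃ x : ℕ → Option (ℕ × Option ℕ), (∀ n, x n ∈ D) ∧
      Filter.Tendsto x Filter.atTop (nhds (none : Option (ℕ × Option ℕ))) := by
    rintro ⟨x, hxD, hx⟩
    choose a b hab using hxD
    by_cases hcase : ∃ A : ℕ, {n | a n = A}.Infinite
    · obtain ⟨A, hA⟩ := hcase
      set U : Set (Option (ℕ × Option ℕ)) := {u | ∀ c : Option ℕ, u ≠ some (A, c)}
        with hUdef
      have hUopen : IsOpen U := by
        constructor
        · intro a' ha'
          have haA : a' ≠ A := by
            intro h
            exact ha' none (by rw [h])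
          exact ⟨0, fun b' _ c hc => haA (by injection hc with h; exact congrArg Prod.fst h)⟩
        · intro _
          refine ⟨A + 1, fun _ => 0, fun a' ha' => ?_⟩
          have haA : a' ≠ A := by omega
          constructor
          · intro c hc
            exact haA (by injection hc with h; exact congrArg Prod.fst h)
          · intro b' _ c hc
            exact haA (by injection hc with h; exact congrArg Prod.fst h)
      have hmem : U ∈ nhds (none : Option (ℕ × Option ℕ)) :=
        hUopen.mem_nhds (fun c hc => by simp at hc)
      have hev : ∀ᶠ n in Filter.atTop, x n ∈ U := hx hmem
      rw [Filter.eventually_atTop] at hev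
      obtain ⟨N, hN⟩ := hev
      obtain ⟨n, hn, hNn⟩ := hA.exists_gt N
      have : a n = A := hn
      exact hN n hNn.le (some (b n)) (by rw [hab n, this])
    · push_neg at hcase
      have hcase' : ∀ A, {n | a n = A}.Finite := fun A => hcase A
      have hbound : ∀ A : ℕ, ∃ m : ℕ, ∀ n, a n = A → b n < m := by
        intro A
        obtain ⟨m, hm⟩ := ((hcase' A).image b).bddAbove
        exact ⟨m + 1, fun n hn => Nat.lt_succ_of_le (hm ⟨n, hn, rfl⟩)⟩
      choose ℓ hℓ using hbound
      set U : Set (Option (ℕ × Option ℕ)) :=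
        {u | u = none ∨ ∃ A : ℕ, u = some (A, none) ∨
          ∃ c : ℕ, ℓ A ≤ c ∧ u = some (A, some c)} with hUdef
      have hUopen : IsOpen U := by
        constructor
        · intro a' _
          exact ⟨ℓ a', fun b' hb' => Or.inr ⟨a', Or.inr ⟨b', hb', rfl⟩⟩⟩
        · intro _
          exact ⟨0, ℓ, fun a' _ =>
            ⟨Or.inr ⟨a', Or.inl rfl⟩, fun b' hb' => Or.inr ⟨a', Or.inr ⟨b', hb', rfl⟩⟩⟩⟩
      have hmem : U ∈ nhds (none : Option (ℕ × Option ℕ)) := hUopen.mem_nhds (Or.inl rfl)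
      have hev : ∀ᶠ n in Filter.atTop, x n ∈ U := hx hmem
      obtain ⟨n, hn⟩ := hev.exists
      rcases hn with h | ⟨A, h | ⟨c, hc, h⟩⟩
      · rw [hab n] at h; exact Option.some_ne_none _ h
      · rw [hab n] at h
        injection h with h
        exact Option.some_ne_none _ (congrArg Prod.snd h)
      · rw [hab n] at h
        injection h with h
        have h1 := congrArg Prod.fst h
        have h2 := congrArg Prod.snd h
        simp at h1 h2
        subst h1
        have := hℓ (a n) n rfl
        omega
  refine ⟨h1, h2, ?_⟩
  intro hFU
  exact h2 (mem_closure_iff_seq_limit.mp h1)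
end
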